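/- arXiv:1906.04399 — 6 statements merged into one kernel-verified Lean document; each statement's English description precedes it below -/
import Mathlib

section
/- There exist symmetric sets A, B ⊆ S_4 whose product AB is not symmetric: for A = {1324, 4132} and B = {2143, 2314}, Q(A) = Q(B) = m_{22} + m_{211} + 2m_{1111} is symmetric, but Q(AB) = M_{31} + M_{22} + 2M_{112} + 2M_{121} + 2M_{211} + 4M_{1111} is not symmetric. -/
open scoped Classical

/-- Successor in `Fin n` (cyclic, but only used under the guard `i+1 < n`). -/
def finSucc {n : ℕ} (i : Fin n) : Fin n := ⟨((i : ℕ) + 1) % n, Nat.mod_lt _ i.pos⟩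

def pDes {n : ℕ} (π : Equiv.Perm (Fin n)) : Finset (Fin n) :=
  Finset.univ.filter fun i => (i : ℕ) + 1 < n ∧ π (finSucc i) < π i

/-- The inverse `J`-class `R_J^{-1} = {σ : Des σ⁻¹ ⊆ J}`, as a multiset. -/
noncomputable def RinvM (n : ℕ) (J : Finset (Fin n)) : Multiset (Equiv.Perm (Fin n)) :=
  (Finset.univ.filter fun σ : Equiv.Perm (Fin n) => pDes σ⁻¹ ⊆ J).val

/-- Product of multisets of permutations (with multiplicity). -/
def mprod {n : ℕ} (A B : Multiset (Equiv.Perm (Fin n))) : Multiset (Equiv.Perm (Fin n)) :=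
  A.bind fun a => B.map fun b => a * b

/-- The composition `co(J)` of `n` corresponding to `J ⊆ [n-1]`, as a list of parts. -/
def compList (n : ℕ) (J : Finset (Fin n)) : List ℕ :=
  let l := (J.sort (· ≤ ·)).map fun i => (i : ℕ) + 1
  List.zipWith (· - ·) (l ++ [n]) (0 :: l)

/-- `co(J)` as a multiset of parts (so `compM n J = compM n K` means `J ∼ K`). -/
def compM (n : ℕ) (J : Finset (Fin n)) : Multiset ℕ := (compList n J : Multiset ℕ)
/-- Gessel's fundamental quasisymmetric function `F_{J,n}` in variables `x_0, x_1, …`,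
as a formal power series: the coefficient of a monomial with exponent vector `d` is the
number of weakly increasing maps `f : Fin n → ℕ`, strict at each position of `J`,
whose fibers have the sizes prescribed by `d`. -/
noncomputable def FQ (n : ℕ) (J : Finset (Fin n)) : MvPowerSeries ℕ ℚ :=
  fun d => (Nat.card {f : Fin n → ℕ //
      (∀ i j : Fin n, i ≤ j → f i ≤ f j) ∧
      (∀ i : Fin n, (i : ℕ) + 1 < n → i ∈ J → f i < f (finSucc i)) ∧
      (∀ k : ℕ, (Finset.univ.filter fun i => f i = k).card = d k)} : ℚ)

/-- `Q(B) = Σ_{π ∈ B} F_{Des(π),n}`. -/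
noncomputable def QB (n : ℕ) (B : Multiset (Equiv.Perm (Fin n))) : MvPowerSeries ℕ ℚ :=
  (B.map fun π => FQ n (pDes π)).sum

/-- A power series in the variables `x_0, x_1, …` is symmetric if it is invariant
under every permutation of the variables. -/
def IsSymmPS (F : MvPowerSeries ℕ ℚ) : Prop :=
  ∀ (e : Equiv.Perm ℕ) (d : ℕ →₀ ℕ),
    MvPowerSeries.coeff (R := ℚ) (Finsupp.equivMapDomain e d) F = MvPowerSeries.coeff (R := ℚ) d F
/-- The monomial quasisymmetric function `M_α` for a composition `α`, as a power
series in `x_0, x_1, …`. -/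
noncomputable def Mq (α : List ℕ) : MvPowerSeries ℕ ℚ :=
  fun d => if ∃ g : Fin α.length → ℕ, StrictMono g ∧
      d = ∑ k : Fin α.length, Finsupp.single (g k) (α.get k) then 1 else 0


noncomputable def vals (d : ℕ →₀ ℕ) : List ℕ := (d.support.sort (· ≤ ·)).map d

lemma vals_coe (d : ℕ →₀ ℕ) : (vals d : Multiset ℕ) = d.support.val.map d := by
  unfold vals
  rw [← Multiset.map_coe, Finset.sort_eq]

lemma vals_sum {ℓ : ℕ} (g : Fin ℓ → ℕ) (hg : StrictMono g) (p : Fin ℓ → ℕ)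
    (hp : ∀ k, 0 < p k) :
    vals (∑ k, Finsupp.single (g k) (p k)) = List.ofFn p := by
  set D := ∑ k, Finsupp.single (g k) (p k) with hD
  have happ : ∀ k, D (g k) = p k := by
    intro k
    rw [hD, Finsupp.finset_sum_apply, Finset.sum_eq_single k]
    · simp
    · intro j _ hj
      rw [Finsupp.single_apply, if_neg (fun h => hj (hg.injective h))]
    · simp
  have hsupp : D.support = Finset.univ.image g := by
    apply Finset.Subset.antisymm
    · intro x hx
      have h2 := Finsupp.mem_support_finset_sum x hx
      obtain ⟨k, _, hk⟩ := h2
      have := Finsupp.support_single_subset hk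
      simp only [Finset.mem_singleton] at this
      subst this
      exact Finset.mem_image_of_mem g (Finset.mem_univ k)
    · intro x hx
      obtain ⟨k, _, rfl⟩ := Finset.mem_image.mp hx
      rw [Finsupp.mem_support_iff, happ k]
      exact (hp k).ne'
  have hsort : (Finset.univ.image g).sort (· ≤ ·) = List.ofFn g := by
    refine (fun hp hs => List.Perm.eq_of_pairwise' (Finset.pairwise_sort _ _) hs hp) ?_ ?_
    · apply Multiset.coe_eq_coe.mp
      rw [Finset.sort_eq, Finset.image_val_of_injOn (Function.Injective.injOn hg.injective),
        List.ofFn_eq_map, ← Multiset.map_coe]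
      congr 1
    · exact List.pairwise_ofFn.mpr fun i j h => (hg h).le
  unfold vals
  rw [hsupp, hsort, List.map_ofFn]
  exact congrArg _ (funext happ)

lemma sum_of_vals (d : ℕ →₀ ℕ) :
    ∃ g : Fin (vals d).length → ℕ, StrictMono g ∧
      d = ∑ k, Finsupp.single (g k) ((vals d).get k) := by
  set L := d.support.sort (· ≤ ·) with hL
  have hlen : (vals d).length = L.length := by simp [vals, hL]
  refine ⟨fun k => L.get (Fin.cast hlen k), ?_, ?_⟩
  · intro i j hij
    exact (Finset.sortedLT_sort _).strictMono_get (by simpa using hij)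
  · have hget : ∀ k : Fin (vals d).length, (vals d).get k = d (L.get (Fin.cast hlen k)) := by
      intro k
      rw [List.get_eq_getElem, List.get_eq_getElem]
      simp [vals, hL]
      rfl
    have h1 : ∑ k : Fin (vals d).length, Finsupp.single (L.get (Fin.cast hlen k)) ((vals d).get k)
        = ∑ k : Fin L.length, Finsupp.single (L.get k) (d (L.get k)) := by
      rw [← (Fin.castOrderIso hlen).toEquiv.sum_comp]
      exact Finset.sum_congr rfl fun k _ => by rw [hget]; rfl
    rw [h1]
    have h2 : ∑ k : Fin L.length, Finsupp.single (L.get k) (d (L.get k))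
        = (L.map fun x => Finsupp.single x (d x)).sum := by
      rw [← Fin.sum_univ_fun_getElem L (fun x => Finsupp.single x (d x))]
      simp
    rw [h2]
    have h3 : (L.map fun x => Finsupp.single x (d x)).sum
        = ∑ x ∈ d.support, Finsupp.single x (d x) := by
      rw [Finset.sum_eq_multiset_sum, ← Finset.sort_eq d.support (· ≤ ·), ← hL,
        Multiset.map_coe, Multiset.sum_coe]
    rw [h3]
    exact (Finsupp.sum_single d).symm

lemma sum_of_vals' {d : ℕ →₀ ℕ} {l : List ℕ} (h : vals d = l) :
    ∃ g : Fin l.length → ℕ, StrictMono g ∧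
      d = ∑ k, Finsupp.single (g k) (l.get k) := h ▸ sum_of_vals d

lemma Mq_eq_vals (α : List ℕ) (hα : ∀ z ∈ α, 0 < z) (d : ℕ →₀ ℕ) :
    Mq α d = if vals d = α then 1 else 0 := by
  unfold Mq
  refine if_congr ?_ rfl rfl
  constructor
  · rintro ⟨g, hg, rfl⟩
    rw [vals_sum g hg _ (fun k => hα _ (α.get_mem _)), List.ofFn_get]
  · exact fun h => sum_of_vals' h

lemma card_filter_fin4 (f : Fin 4 → ℕ) (k : ℕ) :
    (Finset.univ.filter fun i => f i = k).card =
      ((if f 0 = k then 1 else 0) + (if f 1 = k then 1 else 0) +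
       (if f 2 = k then 1 else 0) + (if f 3 = k then 1 else 0)) := by
  rw [Finset.card_filter]
  exact Fin.sum_univ_four _

lemma mono_fib_unique {n : ℕ} (f f' : Fin n → ℕ)
    (hf : ∀ i j, i ≤ j → f i ≤ f j) (hf' : ∀ i j, i ≤ j → f' i ≤ f' j)
    (h : ∀ k, (Finset.univ.filter fun i => f i = k).card
            = (Finset.univ.filter fun i => f' i = k).card) : f = f' := by
  have key : ∀ (F : Fin n → ℕ), (∀ i j, i ≤ j → F i ≤ F j) → ∀ (i : Fin n) (k : ℕ),
      (F i ≤ k ↔ (i : ℕ) < (Finset.univ.filter fun j => F j ≤ k).card) := by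
    intro F hF i k
    constructor
    · intro hik
      have hsub : Finset.Iic i ⊆ Finset.univ.filter fun j => F j ≤ k := by
        intro j hj
        simp only [Finset.mem_filter, Finset.mem_univ, true_and]
        exact le_trans (hF j i (Finset.mem_Iic.mp hj)) hik
      have := Finset.card_le_card hsub
      rw [Fin.card_Iic] at this
      omega
    · intro hc
      by_contra hik
      push_neg at hik
      have hsub : (Finset.univ.filter fun j => F j ≤ k) ⊆ Finset.Iio i := by
        intro j hj
        simp only [Finset.mem_filter, Finset.mem_univ, true_and] at hj
        rw [Finset.mem_Iio]
        by_contra hji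
        push_neg at hji
        exact absurd (le_trans (hF i j hji) hj) (not_le.mpr hik)
      have := Finset.card_le_card hsub
      rw [Fin.card_Iio] at this
      omega
  have hcum : ∀ k, (Finset.univ.filter fun i => f i ≤ k).card
      = (Finset.univ.filter fun i => f' i ≤ k).card := by
    intro k
    have e1 : ∀ (F : Fin n → ℕ), (Finset.univ.filter fun i => F i ≤ k)
        = (Finset.range (k+1)).biUnion fun m => Finset.univ.filter fun i => F i = m := by
      intro F
      ext i
      simp only [Finset.mem_filter, Finset.mem_univ, true_and, Finset.mem_biUnion,
        Finset.mem_range, Nat.lt_succ_iff]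
      exact ⟨fun h => ⟨F i, h, rfl⟩, fun ⟨m, hm, he⟩ => he ▸ hm⟩
    have hdisj : ∀ (F : Fin n → ℕ), ∀ a ∈ Finset.range (k+1), ∀ b ∈ Finset.range (k+1),
        a ≠ b → Disjoint (Finset.univ.filter fun i => F i = a)
          (Finset.univ.filter fun i => F i = b) := by
      intro F a _ b _ hab
      rw [Finset.disjoint_left]
      intro i hia hib
      simp only [Finset.mem_filter] at hia hib
      exact hab (hia.2 ▸ hib.2 ▸ rfl)
    rw [e1 f, e1 f', Finset.card_biUnion (hdisj f), Finset.card_biUnion (hdisj f')]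
    exact Finset.sum_congr rfl fun m _ => h m
  funext i
  have h1 : f i ≤ f' i := by
    rw [key f hf i (f' i), hcum]
    exact (key f' hf' i (f' i)).mp le_rfl
  have h2 : f' i ≤ f i := by
    rw [key f' hf' i (f i), ← hcum]
    exact (key f hf i (f i)).mp le_rfl
  omega

lemma strictMono2 {a b : ℕ} (h : a < b) : StrictMono ![a, b] := by
  intro i j hij
  fin_cases i <;> fin_cases j <;> simp_all <;> omega

lemma strictMono3 {a b c : ℕ} (h1 : a < b) (h2 : b < c) : StrictMono ![a, b, c] := by
  intro i j hij
  fin_cases i <;> fin_cases j <;> simp_all <;> omega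

lemma strictMono4 {a b c e : ℕ} (h1 : a < b) (h2 : b < c) (h3 : c < e) :
    StrictMono ![a, b, c, e] := by
  intro i j hij
  fin_cases i <;> fin_cases j <;> simp_all <;> omega

lemma vals_pair {a b p q : ℕ} (hab : a < b) (hp : 0 < p) (hq : 0 < q) :
    vals (Finsupp.single a p + Finsupp.single b q) = [p, q] := by
  have := vals_sum ![a, b] (strictMono2 hab) ![p, q]
    (fun k => by fin_cases k <;> simpa)
  simpa [Fin.sum_univ_two, List.ofFn_succ] using this

lemma vals_triple {a b c p q r : ℕ} (hab : a < b) (hbc : b < c)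
    (hp : 0 < p) (hq : 0 < q) (hr : 0 < r) :
    vals (Finsupp.single a p + Finsupp.single b q + Finsupp.single c r) = [p, q, r] := by
  have := vals_sum ![a, b, c] (strictMono3 hab hbc) ![p, q, r]
    (fun k => by fin_cases k <;> simpa)
  simpa [Fin.sum_univ_three, List.ofFn_succ, add_assoc] using this

lemma vals_quad {a b c e p q r s : ℕ} (hab : a < b) (hbc : b < c) (hce : c < e)
    (hp : 0 < p) (hq : 0 < q) (hr : 0 < r) (hs : 0 < s) :
    vals (Finsupp.single a p + Finsupp.single b q + Finsupp.single c r
      + Finsupp.single e s) = [p, q, r, s] := by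
  have := vals_sum ![a, b, c, e] (strictMono4 hab hbc hce) ![p, q, r, s]
    (fun k => by fin_cases k <;> simpa)
  simpa [Fin.sum_univ_four, List.ofFn_succ, add_assoc] using this

lemma pair_of_vals {d : ℕ →₀ ℕ} {p q : ℕ} (h : vals d = [p, q]) :
    ∃ a b, a < b ∧ d = Finsupp.single a p + Finsupp.single b q := by
  obtain ⟨g, hg, hd⟩ := sum_of_vals' h
  refine ⟨g ⟨0, by simp⟩, g ⟨1, by simp⟩, hg (by simp [Fin.mk_lt_mk]), ?_⟩
  rw [hd]
  exact Fin.sum_univ_two fun k => Finsupp.single (g k) ([p, q].get k)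

lemma triple_of_vals {d : ℕ →₀ ℕ} {p q r : ℕ} (h : vals d = [p, q, r]) :
    ∃ a b c, a < b ∧ b < c ∧
      d = Finsupp.single a p + Finsupp.single b q + Finsupp.single c r := by
  obtain ⟨g, hg, hd⟩ := sum_of_vals' h
  refine ⟨g ⟨0, by simp⟩, g ⟨1, by simp⟩, g ⟨2, by simp⟩, hg (by simp [Fin.mk_lt_mk]),
    hg (by simp [Fin.mk_lt_mk]), ?_⟩
  rw [hd]
  exact Fin.sum_univ_three fun k => Finsupp.single (g k) ([p, q, r].get k)

lemma quad_of_vals {d : ℕ →₀ ℕ} {p q r s : ℕ} (h : vals d = [p, q, r, s]) :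
    ∃ a b c e, a < b ∧ b < c ∧ c < e ∧
      d = Finsupp.single a p + Finsupp.single b q + Finsupp.single c r
        + Finsupp.single e s := by
  obtain ⟨g, hg, hd⟩ := sum_of_vals' h
  refine ⟨g ⟨0, by simp⟩, g ⟨1, by simp⟩, g ⟨2, by simp⟩, g ⟨3, by simp⟩,
    hg (by simp [Fin.mk_lt_mk]), hg (by simp [Fin.mk_lt_mk]), hg (by simp [Fin.mk_lt_mk]), ?_⟩
  rw [hd]
  exact Fin.sum_univ_four fun k => Finsupp.single (g k) ([p, q, r, s].get k)

section shapes
variable {f : Fin 4 → ℕ} {d : ℕ →₀ ℕ}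

lemma d_1111 (fib : ∀ k, (Finset.univ.filter fun i => f i = k).card = d k) :
    d = Finsupp.single (f 0) 1 + Finsupp.single (f 1) 1 + Finsupp.single (f 2) 1
      + Finsupp.single (f 3) 1 := by
  ext k
  simp only [Finsupp.add_apply, Finsupp.single_apply]
  rw [← fib k, card_filter_fin4]

lemma d_22 (h01 : f 0 = f 1) (h23 : f 2 = f 3)
    (fib : ∀ k, (Finset.univ.filter fun i => f i = k).card = d k) :
    d = Finsupp.single (f 0) 2 + Finsupp.single (f 2) 2 := by
  ext k
  simp only [Finsupp.add_apply, Finsupp.single_apply]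
  rw [← fib k, card_filter_fin4, ← h01, ← h23]
  try split_ifs <;> omega

lemma d_112 (h23 : f 2 = f 3)
    (fib : ∀ k, (Finset.univ.filter fun i => f i = k).card = d k) :
    d = Finsupp.single (f 0) 1 + Finsupp.single (f 1) 1 + Finsupp.single (f 2) 2 := by
  ext k
  simp only [Finsupp.add_apply, Finsupp.single_apply]
  rw [← fib k, card_filter_fin4, ← h23]
  try split_ifs <;> omega

lemma d_211 (h01 : f 0 = f 1)
    (fib : ∀ k, (Finset.univ.filter fun i => f i = k).card = d k) :
    d = Finsupp.single (f 0) 2 + Finsupp.single (f 2) 1 + Finsupp.single (f 3) 1 := by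
  ext k
  simp only [Finsupp.add_apply, Finsupp.single_apply]
  rw [← fib k, card_filter_fin4, ← h01]
  try split_ifs <;> omega

lemma d_121 (h12 : f 1 = f 2)
    (fib : ∀ k, (Finset.univ.filter fun i => f i = k).card = d k) :
    d = Finsupp.single (f 0) 1 + Finsupp.single (f 1) 2 + Finsupp.single (f 3) 1 := by
  ext k
  simp only [Finsupp.add_apply, Finsupp.single_apply]
  rw [← fib k, card_filter_fin4, ← h12]
  try split_ifs <;> omega

lemma d_31 (h01 : f 0 = f 1) (h12 : f 1 = f 2)
    (fib : ∀ k, (Finset.univ.filter fun i => f i = k).card = d k) :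
    d = Finsupp.single (f 0) 3 + Finsupp.single (f 3) 1 := by
  ext k
  simp only [Finsupp.add_apply, Finsupp.single_apply]
  rw [← fib k, card_filter_fin4, ← h12, ← h01]
  try split_ifs <;> omega

end shapes

def FQcond (J : Finset (Fin 4)) (d : ℕ →₀ ℕ) (f : Fin 4 → ℕ) : Prop :=
  (∀ i j : Fin 4, i ≤ j → f i ≤ f j) ∧
  (∀ i : Fin 4, (i : ℕ) + 1 < 4 → i ∈ J → f i < f (finSucc i)) ∧
  (∀ k : ℕ, (Finset.univ.filter fun i => f i = k).card = d k)

lemma mono4 {v : Fin 4 → ℕ} (h01 : v 0 ≤ v 1) (h12 : v 1 ≤ v 2) (h23 : v 2 ≤ v 3) :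
    ∀ i j : Fin 4, i ≤ j → v i ≤ v j := by
  intro i j hij
  fin_cases i <;> fin_cases j <;>
    first
      | exact le_rfl
      | exact h01
      | exact h12
      | exact h23
      | exact le_trans h01 h12
      | exact le_trans h12 h23
      | exact le_trans h01 (le_trans h12 h23)
      | exact absurd hij (by decide)

lemma nonempty_J1 (d : ℕ →₀ ℕ) : (∃ f, FQcond {1} d f) ↔
    vals d = [2,2] ∨ vals d = [1,1,2] ∨ vals d = [2,1,1] ∨ vals d = [1,1,1,1] := by
  constructor
  · rintro ⟨f, hmono, hstrict, fib⟩
    have h12 : f 1 < f 2 := by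
      have := hstrict 1 (by decide) (by decide)
      rwa [show finSucc (1:Fin 4) = 2 from by decide] at this
    have h01 := hmono 0 1 (by decide)
    have h23 := hmono 2 3 (by decide)
    rcases h01.lt_or_eq with h01 | h01 <;> rcases h23.lt_or_eq with h23 | h23
    · right; right; right
      rw [d_1111 fib]
      exact vals_quad h01 h12 h23 one_pos one_pos one_pos one_pos
    · right; left
      rw [d_112 h23 fib]
      exact vals_triple h01 h12 one_pos one_pos two_pos
    · right; right; left
      rw [d_211 h01 fib]
      exact vals_triple (lt_of_le_of_lt h01.le h12) h23 two_pos one_pos one_pos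
    · left
      rw [d_22 h01 h23 fib]
      exact vals_pair (lt_of_le_of_lt h01.le h12) two_pos two_pos
  · rintro (h | h | h | h)
    · obtain ⟨a, b, hab, hd⟩ := pair_of_vals h
      refine ⟨![a,a,b,b], mono4 (by simp) (by simp [hab.le]) (by simp), ?_, ?_⟩
      · intro i h4 hi
        have hi1 : i = 1 := by simpa using hi
        subst hi1
        rw [show finSucc (1:Fin 4) = 2 from by decide]
        simpa using hab
      · intro k
        rw [card_filter_fin4, hd]
        simp only [Matrix.cons_val_zero, Matrix.cons_val_one, Matrix.head_cons,
          Matrix.cons_val_two, Matrix.tail_cons, Matrix.cons_val_three,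
          Finsupp.add_apply, Finsupp.single_apply]
        grind
    · obtain ⟨a, b, c, hab, hbc, hd⟩ := triple_of_vals h
      refine ⟨![a,b,c,c], mono4 (by simp [hab.le]) (by simp [hbc.le]) (by simp), ?_, ?_⟩
      · intro i h4 hi
        have hi1 : i = 1 := by simpa using hi
        subst hi1
        rw [show finSucc (1:Fin 4) = 2 from by decide]
        simpa using hbc
      · intro k
        rw [card_filter_fin4, hd]
        simp only [Matrix.cons_val_zero, Matrix.cons_val_one, Matrix.head_cons,
          Matrix.cons_val_two, Matrix.tail_cons, Matrix.cons_val_three,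
          Finsupp.add_apply, Finsupp.single_apply]
        grind
    · obtain ⟨a, b, c, hab, hbc, hd⟩ := triple_of_vals h
      refine ⟨![a,a,b,c], mono4 (by simp) (by simp [hab.le]) (by simp [hbc.le]), ?_, ?_⟩
      · intro i h4 hi
        have hi1 : i = 1 := by simpa using hi
        subst hi1
        rw [show finSucc (1:Fin 4) = 2 from by decide]
        simpa using hab
      · intro k
        rw [card_filter_fin4, hd]
        simp only [Matrix.cons_val_zero, Matrix.cons_val_one, Matrix.head_cons,
          Matrix.cons_val_two, Matrix.tail_cons, Matrix.cons_val_three,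
          Finsupp.add_apply, Finsupp.single_apply]
        grind
    · obtain ⟨a, b, c, e, hab, hbc, hce, hd⟩ := quad_of_vals h
      refine ⟨![a,b,c,e], mono4 (by simp [hab.le]) (by simp [hbc.le]) (by simp [hce.le]),
        ?_, ?_⟩
      · intro i h4 hi
        have hi1 : i = 1 := by simpa using hi
        subst hi1
        rw [show finSucc (1:Fin 4) = 2 from by decide]
        simpa using hbc
      · intro k
        rw [card_filter_fin4, hd]
        simp only [Matrix.cons_val_zero, Matrix.cons_val_one, Matrix.head_cons,
          Matrix.cons_val_two, Matrix.tail_cons, Matrix.cons_val_three,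
          Finsupp.add_apply, Finsupp.single_apply]
        grind

lemma nonempty_J02 (d : ℕ →₀ ℕ) : (∃ f, FQcond {0, 2} d f) ↔
    vals d = [1,2,1] ∨ vals d = [1,1,1,1] := by
  constructor
  · rintro ⟨f, hmono, hstrict, fib⟩
    have h01 : f 0 < f 1 := by
      have := hstrict 0 (by decide) (by decide)
      rwa [show finSucc (0:Fin 4) = 1 from by decide] at this
    have h23 : f 2 < f 3 := by
      have := hstrict 2 (by decide) (by decide)
      rwa [show finSucc (2:Fin 4) = 3 from by decide] at this
    have h12 := hmono 1 2 (by decide)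
    rcases h12.lt_or_eq with h12 | h12
    · right
      rw [d_1111 fib]
      exact vals_quad h01 h12 h23 one_pos one_pos one_pos one_pos
    · left
      rw [d_121 h12 fib]
      exact vals_triple h01 (lt_of_le_of_lt h12.le h23) one_pos two_pos one_pos
  · rintro (h | h)
    · obtain ⟨a, b, c, hab, hbc, hd⟩ := triple_of_vals h
      refine ⟨![a,b,b,c], mono4 (by simp [hab.le]) (by simp) (by simp [hbc.le]), ?_, ?_⟩
      · intro i h4 hi
        have hi1 := by simpa using hi
        rcases hi1 with rfl | rfl
        · rw [show finSucc (0:Fin 4) = 1 from by decide]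
          simpa using hab
        · rw [show finSucc (2:Fin 4) = 3 from by decide]
          simpa using hbc
      · intro k
        rw [card_filter_fin4, hd]
        simp only [Matrix.cons_val_zero, Matrix.cons_val_one, Matrix.head_cons,
          Matrix.cons_val_two, Matrix.tail_cons, Matrix.cons_val_three,
          Finsupp.add_apply, Finsupp.single_apply]
        grind
    · obtain ⟨a, b, c, e, hab, hbc, hce, hd⟩ := quad_of_vals h
      refine ⟨![a,b,c,e], mono4 (by simp [hab.le]) (by simp [hbc.le]) (by simp [hce.le]),
        ?_, ?_⟩
      · intro i h4 hi
        have hi1 := by simpa using hi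
        rcases hi1 with rfl | rfl
        · rw [show finSucc (0:Fin 4) = 1 from by decide]
          simpa using hab
        · rw [show finSucc (2:Fin 4) = 3 from by decide]
          simpa using hce
      · intro k
        rw [card_filter_fin4, hd]
        simp only [Matrix.cons_val_zero, Matrix.cons_val_one, Matrix.head_cons,
          Matrix.cons_val_two, Matrix.tail_cons, Matrix.cons_val_three,
          Finsupp.add_apply, Finsupp.single_apply]
        grind

lemma nonempty_J01 (d : ℕ →₀ ℕ) : (∃ f, FQcond {0, 1} d f) ↔
    vals d = [1,1,2] ∨ vals d = [1,1,1,1] := by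
  constructor
  · rintro ⟨f, hmono, hstrict, fib⟩
    have h01 : f 0 < f 1 := by
      have := hstrict 0 (by decide) (by decide)
      rwa [show finSucc (0:Fin 4) = 1 from by decide] at this
    have h12 : f 1 < f 2 := by
      have := hstrict 1 (by decide) (by decide)
      rwa [show finSucc (1:Fin 4) = 2 from by decide] at this
    have h23 := hmono 2 3 (by decide)
    rcases h23.lt_or_eq with h23 | h23
    · right
      rw [d_1111 fib]
      exact vals_quad h01 h12 h23 one_pos one_pos one_pos one_pos
    · left
      rw [d_112 h23 fib]
      exact vals_triple h01 h12 one_pos one_pos two_pos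
  · rintro (h | h)
    · obtain ⟨a, b, c, hab, hbc, hd⟩ := triple_of_vals h
      refine ⟨![a,b,c,c], mono4 (by simp [hab.le]) (by simp [hbc.le]) (by simp), ?_, ?_⟩
      · intro i h4 hi
        have hi1 := by simpa using hi
        rcases hi1 with rfl | rfl
        · rw [show finSucc (0:Fin 4) = 1 from by decide]
          simpa using hab
        · rw [show finSucc (1:Fin 4) = 2 from by decide]
          simpa using hbc
      · intro k
        rw [card_filter_fin4, hd]
        simp only [Matrix.cons_val_zero, Matrix.cons_val_one, Matrix.head_cons,
          Matrix.cons_val_two, Matrix.tail_cons, Matrix.cons_val_three,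
          Finsupp.add_apply, Finsupp.single_apply]
        grind
    · obtain ⟨a, b, c, e, hab, hbc, hce, hd⟩ := quad_of_vals h
      refine ⟨![a,b,c,e], mono4 (by simp [hab.le]) (by simp [hbc.le]) (by simp [hce.le]),
        ?_, ?_⟩
      · intro i h4 hi
        have hi1 := by simpa using hi
        rcases hi1 with rfl | rfl
        · rw [show finSucc (0:Fin 4) = 1 from by decide]
          simpa using hab
        · rw [show finSucc (1:Fin 4) = 2 from by decide]
          simpa using hbc
      · intro k
        rw [card_filter_fin4, hd]
        simp only [Matrix.cons_val_zero, Matrix.cons_val_one, Matrix.head_cons,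
          Matrix.cons_val_two, Matrix.tail_cons, Matrix.cons_val_three,
          Finsupp.add_apply, Finsupp.single_apply]
        grind

lemma nonempty_J2 (d : ℕ →₀ ℕ) : (∃ f, FQcond {2} d f) ↔
    vals d = [3,1] ∨ vals d = [1,2,1] ∨ vals d = [2,1,1] ∨ vals d = [1,1,1,1] := by
  constructor
  · rintro ⟨f, hmono, hstrict, fib⟩
    have h23 : f 2 < f 3 := by
      have := hstrict 2 (by decide) (by decide)
      rwa [show finSucc (2:Fin 4) = 3 from by decide] at this
    have h01 := hmono 0 1 (by decide)
    have h12 := hmono 1 2 (by decide)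
    rcases h01.lt_or_eq with h01 | h01 <;> rcases h12.lt_or_eq with h12 | h12
    · right; right; right
      rw [d_1111 fib]
      exact vals_quad h01 h12 h23 one_pos one_pos one_pos one_pos
    · right; left
      rw [d_121 h12 fib]
      exact vals_triple h01 (lt_of_le_of_lt h12.le h23) one_pos two_pos one_pos
    · right; right; left
      rw [d_211 h01 fib]
      exact vals_triple (lt_of_le_of_lt h01.le h12) h23 two_pos one_pos one_pos
    · left
      rw [d_31 h01 h12 fib]
      exact vals_pair (lt_of_le_of_lt (h01.trans h12).le h23) three_pos one_pos
  · rintro (h | h | h | h)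
    · obtain ⟨a, b, hab, hd⟩ := pair_of_vals h
      refine ⟨![a,a,a,b], mono4 (by simp) (by simp) (by simp [hab.le]), ?_, ?_⟩
      · intro i h4 hi
        have hi1 := by simpa using hi
        subst hi1
        rw [show finSucc (2:Fin 4) = 3 from by decide]
        simpa using hab
      · intro k
        rw [card_filter_fin4, hd]
        simp only [Matrix.cons_val_zero, Matrix.cons_val_one, Matrix.head_cons,
          Matrix.cons_val_two, Matrix.tail_cons, Matrix.cons_val_three,
          Finsupp.add_apply, Finsupp.single_apply]
        grind
    · obtain ⟨a, b, c, hab, hbc, hd⟩ := triple_of_vals h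
      refine ⟨![a,b,b,c], mono4 (by simp [hab.le]) (by simp) (by simp [hbc.le]), ?_, ?_⟩
      · intro i h4 hi
        have hi1 := by simpa using hi
        subst hi1
        rw [show finSucc (2:Fin 4) = 3 from by decide]
        simpa using hbc
      · intro k
        rw [card_filter_fin4, hd]
        simp only [Matrix.cons_val_zero, Matrix.cons_val_one, Matrix.head_cons,
          Matrix.cons_val_two, Matrix.tail_cons, Matrix.cons_val_three,
          Finsupp.add_apply, Finsupp.single_apply]
        grind
    · obtain ⟨a, b, c, hab, hbc, hd⟩ := triple_of_vals h
      refine ⟨![a,a,b,c], mono4 (by simp) (by simp [hab.le]) (by simp [hbc.le]), ?_, ?_⟩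
      · intro i h4 hi
        have hi1 := by simpa using hi
        subst hi1
        rw [show finSucc (2:Fin 4) = 3 from by decide]
        simpa using hbc
      · intro k
        rw [card_filter_fin4, hd]
        simp only [Matrix.cons_val_zero, Matrix.cons_val_one, Matrix.head_cons,
          Matrix.cons_val_two, Matrix.tail_cons, Matrix.cons_val_three,
          Finsupp.add_apply, Finsupp.single_apply]
        grind
    · obtain ⟨a, b, c, e, hab, hbc, hce, hd⟩ := quad_of_vals h
      refine ⟨![a,b,c,e], mono4 (by simp [hab.le]) (by simp [hbc.le]) (by simp [hce.le]),
        ?_, ?_⟩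
      · intro i h4 hi
        have hi1 := by simpa using hi
        subst hi1
        rw [show finSucc (2:Fin 4) = 3 from by decide]
        simpa using hce
      · intro k
        rw [card_filter_fin4, hd]
        simp only [Matrix.cons_val_zero, Matrix.cons_val_one, Matrix.head_cons,
          Matrix.cons_val_two, Matrix.tail_cons, Matrix.cons_val_three,
          Finsupp.add_apply, Finsupp.single_apply]
        grind

lemma card_cond (J : Finset (Fin 4)) (d : ℕ →₀ ℕ) :
    (Nat.card {f // FQcond J d f}) = if ∃ f, FQcond J d f then 1 else 0 := by
  have hs : Subsingleton {f // FQcond J d f} := by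
    constructor
    rintro ⟨f, hf⟩ ⟨f', hf'⟩
    exact Subtype.ext (mono_fib_unique f f' hf.1 hf'.1
      (fun k => (hf.2.2 k).trans (hf'.2.2 k).symm))
  by_cases h : ∃ f, FQcond J d f
  · rw [if_pos h]
    exact Nat.card_eq_one_iff_unique.mpr ⟨hs, ⟨⟨h.choose, h.choose_spec⟩⟩⟩
  · rw [if_neg h]
    have : IsEmpty {f // FQcond J d f} := ⟨fun ⟨f, hf⟩ => h ⟨f, hf⟩⟩
    exact Nat.card_of_isEmpty

lemma FQ_J1 : FQ 4 {1} = Mq [2,2] + Mq [1,1,2] + Mq [2,1,1] + Mq [1,1,1,1] := by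
  funext d
  show ((Nat.card {f // FQcond {1} d f} : ℕ) : ℚ)
      = Mq [2,2] d + Mq [1,1,2] d + Mq [2,1,1] d + Mq [1,1,1,1] d
  rw [card_cond, Mq_eq_vals _ (by decide) d, Mq_eq_vals _ (by decide) d,
    Mq_eq_vals _ (by decide) d, Mq_eq_vals _ (by decide) d,
    if_congr (nonempty_J1 d) rfl rfl]
  by_cases h : vals d = [2,2] ∨ vals d = [1,1,2] ∨ vals d = [2,1,1] ∨ vals d = [1,1,1,1]
  · rcases h with h | h | h | h <;> simp [h]
  · push_neg at h
    obtain ⟨h1, h2, h3, h4⟩ := h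
    simp [h1, h2, h3, h4]

lemma FQ_J02 : FQ 4 {0, 2} = Mq [1,2,1] + Mq [1,1,1,1] := by
  funext d
  show ((Nat.card {f // FQcond {0, 2} d f} : ℕ) : ℚ) = Mq [1,2,1] d + Mq [1,1,1,1] d
  rw [card_cond, Mq_eq_vals _ (by decide) d, Mq_eq_vals _ (by decide) d,
    if_congr (nonempty_J02 d) rfl rfl]
  by_cases h : vals d = [1,2,1] ∨ vals d = [1,1,1,1]
  · rcases h with h | h <;> simp [h]
  · push_neg at h
    obtain ⟨h1, h2⟩ := h
    simp [h1, h2]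

lemma FQ_J01 : FQ 4 {0, 1} = Mq [1,1,2] + Mq [1,1,1,1] := by
  funext d
  show ((Nat.card {f // FQcond {0, 1} d f} : ℕ) : ℚ) = Mq [1,1,2] d + Mq [1,1,1,1] d
  rw [card_cond, Mq_eq_vals _ (by decide) d, Mq_eq_vals _ (by decide) d,
    if_congr (nonempty_J01 d) rfl rfl]
  by_cases h : vals d = [1,1,2] ∨ vals d = [1,1,1,1]
  · rcases h with h | h <;> simp [h]
  · push_neg at h
    obtain ⟨h1, h2⟩ := h
    simp [h1, h2]

lemma FQ_J2 : FQ 4 {2} = Mq [3,1] + Mq [1,2,1] + Mq [2,1,1] + Mq [1,1,1,1] := by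
  funext d
  show ((Nat.card {f // FQcond {2} d f} : ℕ) : ℚ)
      = Mq [3,1] d + Mq [1,2,1] d + Mq [2,1,1] d + Mq [1,1,1,1] d
  rw [card_cond, Mq_eq_vals _ (by decide) d, Mq_eq_vals _ (by decide) d,
    Mq_eq_vals _ (by decide) d, Mq_eq_vals _ (by decide) d,
    if_congr (nonempty_J2 d) rfl rfl]
  by_cases h : vals d = [3,1] ∨ vals d = [1,2,1] ∨ vals d = [2,1,1] ∨ vals d = [1,1,1,1]
  · rcases h with h | h | h | h <;> simp [h]
  · push_neg at h
    obtain ⟨h1, h2, h3, h4⟩ := h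
    simp [h1, h2, h3, h4]

lemma vals_perm (e : Equiv.Perm ℕ) (d : ℕ →₀ ℕ) :
    (vals (Finsupp.equivMapDomain e d)).Perm (vals d) := by
  rw [← Multiset.coe_eq_coe, vals_coe, vals_coe]
  have hsupp : (Finsupp.equivMapDomain e d).support = d.support.map e.toEmbedding := by
    ext x
    simp only [Finsupp.mem_support_iff, Finsupp.equivMapDomain_apply, Finset.mem_map,
      Equiv.coe_toEmbedding]
    constructor
    · intro h
      exact ⟨e.symm x, h, by simp⟩
    · rintro ⟨y, hy, rfl⟩
      simpa using hy
  rw [hsupp, Finset.map_val, Multiset.map_map]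
  apply Multiset.map_congr rfl
  intro y _
  simp [Finsupp.equivMapDomain_apply]

lemma perm_112 (l : List ℕ) (h : l.Perm [1,1,2]) :
    l = [1,1,2] ∨ l = [1,2,1] ∨ l = [2,1,1] := by
  have hlen := h.length_eq
  rcases l with _ | ⟨x, _ | ⟨y, _ | ⟨z, _ | ⟨w, t⟩⟩⟩⟩ <;> simp at hlen
  have h1 := h.count_eq 1
  have h2 := h.count_eq 2
  have hx : x = 1 ∨ x = 2 := by
    have : x ∈ [1,1,2] := h.mem_iff.mp (by simp)
    simpa using this
  have hy : y = 1 ∨ y = 2 := by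
    have : y ∈ [1,1,2] := h.mem_iff.mp (by simp)
    simpa using this
  have hz : z = 1 ∨ z = 2 := by
    have : z ∈ [1,1,2] := h.mem_iff.mp (by simp)
    simpa using this
  rcases hx with rfl | rfl <;> rcases hy with rfl | rfl <;> rcases hz with rfl | rfl <;>
    simp_all [List.count_cons]

lemma eq_rep {x y : List ℕ} (hxy : x.Perm y) (n a : ℕ) :
    (x = List.replicate n a) ↔ (y = List.replicate n a) := by
  constructor
  · rintro rfl
    exact (List.perm_replicate.mp hxy.symm)
  · rintro rfl
    exact (List.perm_replicate.mp hxy)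

lemma group112 {x y : List ℕ} (hxy : x.Perm y) :
    ((if x = [2,1,1] then (1:ℚ) else 0) + (if x = [1,2,1] then 1 else 0)
      + (if x = [1,1,2] then 1 else 0))
    = ((if y = [2,1,1] then (1:ℚ) else 0) + (if y = [1,2,1] then 1 else 0)
      + (if y = [1,1,2] then 1 else 0)) := by
  have hperm : ∀ l : List ℕ, l = [2,1,1] ∨ l = [1,2,1] ∨ l = [1,1,2] → l.Perm [1,1,2] := by
    rintro l (rfl | rfl | rfl) <;> decide
  by_cases hu : x.Perm [1,1,2]
  · have hv : y.Perm [1,1,2] := hxy.symm.trans hu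
    rcases perm_112 x hu with rfl | rfl | rfl <;>
      rcases perm_112 y hv with rfl | rfl | rfl <;> norm_num
  · have hv : ¬ y.Perm [1,1,2] := fun h => hu (hxy.trans h)
    have n1 : x ≠ [2,1,1] := fun h => hu (hperm x (Or.inl h))
    have n2 : x ≠ [1,2,1] := fun h => hu (hperm x (Or.inr (Or.inl h)))
    have n3 : x ≠ [1,1,2] := fun h => hu (hperm x (Or.inr (Or.inr h)))
    have m1 : y ≠ [2,1,1] := fun h => hv (hperm y (Or.inl h))
    have m2 : y ≠ [1,2,1] := fun h => hv (hperm y (Or.inr (Or.inl h)))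
    have m3 : y ≠ [1,1,2] := fun h => hv (hperm y (Or.inr (Or.inr h)))
    simp [n1, n2, n3, m1, m2, m3]

lemma GA_apply (D : ℕ →₀ ℕ) :
    (Mq [2,2] + (Mq [2,1,1] + Mq [1,2,1] + Mq [1,1,2]) + 2 • Mq [1,1,1,1]) D
    = (if vals D = [2,2] then (1:ℚ) else 0)
      + ((if vals D = [2,1,1] then (1:ℚ) else 0) + (if vals D = [1,2,1] then (1:ℚ) else 0)
         + (if vals D = [1,1,2] then (1:ℚ) else 0))
      + 2 • (if vals D = [1,1,1,1] then (1:ℚ) else 0) := by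
  show Mq [2,2] D + (Mq [2,1,1] D + Mq [1,2,1] D + Mq [1,1,2] D) + 2 • Mq [1,1,1,1] D = _
  rw [Mq_eq_vals _ (by decide), Mq_eq_vals _ (by decide), Mq_eq_vals _ (by decide),
    Mq_eq_vals _ (by decide), Mq_eq_vals _ (by decide)]

lemma symm_GA : ∀ (e : Equiv.Perm ℕ) (d : ℕ →₀ ℕ),
    (Mq [2,2] + (Mq [2,1,1] + Mq [1,2,1] + Mq [1,1,2]) + 2 • Mq [1,1,1,1])
      (Finsupp.equivMapDomain e d)
    = (Mq [2,2] + (Mq [2,1,1] + Mq [1,2,1] + Mq [1,1,2]) + 2 • Mq [1,1,1,1]) d := by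
  intro e d
  rw [GA_apply, GA_apply]
  have hxy := vals_perm e d
  have h22 : vals (Finsupp.equivMapDomain e d) = [2,2] ↔ vals d = [2,2] := eq_rep hxy 2 2
  have h14 : vals (Finsupp.equivMapDomain e d) = [1,1,1,1] ↔ vals d = [1,1,1,1] :=
    eq_rep hxy 4 1
  rw [if_congr h22 rfl rfl, if_congr h14 rfl rfl, group112 hxy]

lemma symm_G : IsSymmPS (Mq [2,2] + (Mq [2,1,1] + Mq [1,2,1] + Mq [1,1,2])
    + 2 • Mq [1,1,1,1]) :=
  fun e d => symm_GA e d

lemma QA_eq : QB 4 {Equiv.swap 1 2, ([0, 3, 1] : List (Fin 4)).formPerm}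
    = Mq [2, 2] + (Mq [2, 1, 1] + Mq [1, 2, 1] + Mq [1, 1, 2]) + 2 • Mq [1, 1, 1, 1] := by
  have h1 : pDes (Equiv.swap 1 2 : Equiv.Perm (Fin 4)) = {1} := by decide
  have h2 : pDes (([0, 3, 1] : List (Fin 4)).formPerm) = {0, 2} := by decide
  unfold QB
  simp only [Multiset.insert_eq_cons, Multiset.map_cons, Multiset.map_singleton,
    Multiset.sum_cons, Multiset.sum_singleton]
  rw [h1, h2, FQ_J1, FQ_J02]
  abel

lemma QBB_eq : QB 4 {Equiv.swap 0 1 * Equiv.swap 2 3, ([0, 1, 2] : List (Fin 4)).formPerm}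
    = Mq [2, 2] + (Mq [2, 1, 1] + Mq [1, 2, 1] + Mq [1, 1, 2]) + 2 • Mq [1, 1, 1, 1] := by
  have h1 : pDes (Equiv.swap 0 1 * Equiv.swap 2 3 : Equiv.Perm (Fin 4)) = {0, 2} := by decide
  have h2 : pDes (([0, 1, 2] : List (Fin 4)).formPerm) = {1} := by decide
  unfold QB
  simp only [Multiset.insert_eq_cons, Multiset.map_cons, Multiset.map_singleton,
    Multiset.sum_cons, Multiset.sum_singleton]
  rw [h1, h2, FQ_J02, FQ_J1]
  abel

lemma QAB_eq : QB 4 (mprod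
    {Equiv.swap 1 2, ([0, 3, 1] : List (Fin 4)).formPerm}
    {Equiv.swap 0 1 * Equiv.swap 2 3, ([0, 1, 2] : List (Fin 4)).formPerm})
    = Mq [3, 1] + Mq [2, 2] + 2 • Mq [1, 1, 2] + 2 • Mq [1, 2, 1] +
        2 • Mq [2, 1, 1] + 4 • Mq [1, 1, 1, 1] := by
  have h11 : pDes (Equiv.swap 1 2 * (Equiv.swap 0 1 * Equiv.swap 2 3) :
      Equiv.Perm (Fin 4)) = {0, 2} := by decide
  have h12 : pDes (Equiv.swap 1 2 * ([0, 1, 2] : List (Fin 4)).formPerm) = {0, 1} := by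
    decide
  have h21 : pDes (([0, 3, 1] : List (Fin 4)).formPerm *
      (Equiv.swap 0 1 * Equiv.swap 2 3)) = {1} := by decide
  have h22 : pDes (([0, 3, 1] : List (Fin 4)).formPerm *
      ([0, 1, 2] : List (Fin 4)).formPerm) = {2} := by decide
  unfold QB mprod
  simp only [Multiset.insert_eq_cons, Multiset.cons_bind, Multiset.singleton_bind,
    Multiset.map_cons, Multiset.map_singleton, Multiset.map_add, Multiset.sum_add,
    Multiset.sum_cons, Multiset.sum_singleton]
  rw [h11, h12, h21, h22, FQ_J02, FQ_J01, FQ_J1, FQ_J2]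
  abel

lemma GAB_apply (D : ℕ →₀ ℕ) :
    (Mq [3, 1] + Mq [2, 2] + 2 • Mq [1, 1, 2] + 2 • Mq [1, 2, 1] +
        2 • Mq [2, 1, 1] + 4 • Mq [1, 1, 1, 1]) D
    = (if vals D = [3,1] then (1:ℚ) else 0) + (if vals D = [2,2] then (1:ℚ) else 0)
      + 2 • (if vals D = [1,1,2] then (1:ℚ) else 0)
      + 2 • (if vals D = [1,2,1] then (1:ℚ) else 0)
      + 2 • (if vals D = [2,1,1] then (1:ℚ) else 0)
      + 4 • (if vals D = [1,1,1,1] then (1:ℚ) else 0) := by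
  show Mq [3,1] D + Mq [2,2] D + 2 • Mq [1,1,2] D + 2 • Mq [1,2,1] D
      + 2 • Mq [2,1,1] D + 4 • Mq [1,1,1,1] D = _
  rw [Mq_eq_vals _ (by decide), Mq_eq_vals _ (by decide), Mq_eq_vals _ (by decide),
    Mq_eq_vals _ (by decide), Mq_eq_vals _ (by decide), Mq_eq_vals _ (by decide)]

lemma notsym_G : ¬ IsSymmPS (Mq [3, 1] + Mq [2, 2] + 2 • Mq [1, 1, 2] + 2 • Mq [1, 2, 1] +
    2 • Mq [2, 1, 1] + 4 • Mq [1, 1, 1, 1]) := by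
  intro hsym
  set d0 : ℕ →₀ ℕ := Finsupp.single 0 3 + Finsupp.single 1 1 with hd0
  have hv0 : vals d0 = [3, 1] := vals_pair (by norm_num) (by norm_num) (by norm_num)
  have hd1 : Finsupp.equivMapDomain (Equiv.swap 0 1) d0
      = Finsupp.single 0 1 + Finsupp.single 1 3 := by
    ext x
    rw [hd0, Finsupp.equivMapDomain_apply]
    rcases eq_or_ne x 0 with rfl | hx0
    · simp
    rcases eq_or_ne x 1 with rfl | hx1
    · simp
    · simp [Equiv.swap_apply_of_ne_of_ne hx0 hx1, Finsupp.single_apply,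
        Ne.symm hx0, Ne.symm hx1]
  have hv1 : vals (Finsupp.equivMapDomain (Equiv.swap 0 1) d0) = [1, 3] := by
    rw [hd1]
    exact vals_pair (by norm_num) (by norm_num) (by norm_num)
  have h := hsym (Equiv.swap 0 1) d0
  rw [show ∀ F : MvPowerSeries ℕ ℚ, ∀ D, MvPowerSeries.coeff D F = F D from
    fun _ _ => rfl, show ∀ F : MvPowerSeries ℕ ℚ, ∀ D, MvPowerSeries.coeff D F = F D from
    fun _ _ => rfl, GAB_apply, GAB_apply, hv0, hv1] at h
  norm_num at h

/-- For `A = {1324, 4132}` and `B = {2143, 2314}` in `S_4`,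
`Q(A) = Q(B) = m_{22} + m_{211} + 2m_{1111}` is symmetric, but
`Q(AB) = M_{31} + M_{22} + 2M_{112} + 2M_{121} + 2M_{211} + 4M_{1111}`
is not symmetric. -/
theorem product_not_symmetric :
    let A : Multiset (Equiv.Perm (Fin 4)) :=
      {Equiv.swap 1 2, ([0, 3, 1] : List (Fin 4)).formPerm}
    let B : Multiset (Equiv.Perm (Fin 4)) :=
      {Equiv.swap 0 1 * Equiv.swap 2 3, ([0, 1, 2] : List (Fin 4)).formPerm}
    QB 4 A = Mq [2, 2] + (Mq [2, 1, 1] + Mq [1, 2, 1] + Mq [1, 1, 2]) +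
        2 • Mq [1, 1, 1, 1] ∧
    QB 4 B = Mq [2, 2] + (Mq [2, 1, 1] + Mq [1, 2, 1] + Mq [1, 1, 2]) +
        2 • Mq [1, 1, 1, 1] ∧
    IsSymmPS (QB 4 A) ∧ IsSymmPS (QB 4 B) ∧
    QB 4 (mprod A B) = Mq [3, 1] + Mq [2, 2] + 2 • Mq [1, 1, 2] + 2 • Mq [1, 2, 1] +
        2 • Mq [2, 1, 1] + 4 • Mq [1, 1, 1, 1] ∧
    ¬ IsSymmPS (QB 4 (mprod A B)) := by
  intro A B
  refine ⟨QA_eq, QBB_eq, ?_, ?_, QAB_eq, ?_⟩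
  · show IsSymmPS (QB 4 ({Equiv.swap 1 2, ([0, 3, 1] : List (Fin 4)).formPerm} :
      Multiset (Equiv.Perm (Fin 4))))
    rw [QA_eq]
    exact symm_G
  · show IsSymmPS (QB 4 ({Equiv.swap 0 1 * Equiv.swap 2 3,
      ([0, 1, 2] : List (Fin 4)).formPerm} : Multiset (Equiv.Perm (Fin 4))))
    rw [QBB_eq]
    exact symm_G
  · show ¬ IsSymmPS (QB 4 (mprod
      {Equiv.swap 1 2, ([0, 3, 1] : List (Fin 4)).formPerm}
      {Equiv.swap 0 1 * Equiv.swap 2 3, ([0, 1, 2] : List (Fin 4)).formPerm}))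
    rw [QAB_eq]
    exact notsym_G
end

section
/- A multiset B ⊆ S_n is D-symmetric if and only if for each ordered set partition U = (U, V) of [n] into exactly two blocks there exists a bijection Ψ_U : B → B satisfying the D-symmetry condition: for each u ∈ U* and π ∈ B, u ∈ Des(π) ⟺ δ_U(u) ∈ Des(Ψ_U(π)). -/
open scoped Classical

/-- `U` is an ordered set partition of `Fin n` of type `c` (blocks listed in order,
with `|U_i| = c_i`, pairwise disjoint, covering). -/
def IsOSP (n : ℕ) (c : List ℕ) (U : List (Finset (Fin n))) : Prop :=
  U.map Finset.card = c ∧ U.Pairwise Disjoint ∧ ∀ x : Fin n, ∃ s ∈ U, x ∈ s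

/-- `U` is an ordered set partition of `Fin n` (nonempty pairwise disjoint blocks covering). -/
def OSPn (n : ℕ) (U : List (Finset (Fin n))) : Prop :=
  U.Pairwise Disjoint ∧ (∀ s ∈ U, s.Nonempty) ∧ ∀ x : Fin n, ∃ s ∈ U, x ∈ s

/-- `δ` is the permutation `δ_U` associated to an ordered set partition `U` of type `c`:
it is increasing on each block `U_i`, and sends `U_i` onto the `i`-th consecutive
interval of values (of length `c_i`). -/
def IsDelta {n : ℕ} (c : List ℕ) (U : List (Finset (Fin n))) (δ : Equiv.Perm (Fin n)) : Prop :=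
  ∀ i (h : i < U.length),
    (∀ x ∈ U.get ⟨i, h⟩, ∀ y ∈ U.get ⟨i, h⟩, x < y → δ x < δ y) ∧
    (∀ x ∈ U.get ⟨i, h⟩, (c.take i).sum ≤ (δ x : ℕ) ∧ (δ x : ℕ) < (c.take (i + 1)).sum)

/-- `U* = {i : i and i+1 lie in the same block of U}` (0-indexed positions). -/
def Ustar (n : ℕ) (U : List (Finset (Fin n))) : Finset (Fin n) :=
  Finset.univ.filter fun i => (i : ℕ) + 1 < n ∧ ∃ s ∈ U, i ∈ s ∧ finSucc i ∈ s
/-- A multiset `B ⊆ S_n` is `D`-symmetric if for every ordered set partition `U` of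
`[n]` (with associated permutation `δ_U`) there is a bijection `Ψ : B → B` such that
for each `u ∈ U*` and `π ∈ B`, `u ∈ Des(π) ⟺ δ_U(u) ∈ Des(Ψ(π))`. -/
def DSymm (n : ℕ) (B : Multiset (Equiv.Perm (Fin n))) : Prop :=
  ∀ U : List (Finset (Fin n)), OSPn n U →
    ∀ δU : Equiv.Perm (Fin n), IsDelta (U.map Finset.card) U δU →
      ∃ Ψ : Equiv.Perm (Fin n) → Equiv.Perm (Fin n), B.map Ψ = B ∧
        ∀ u ∈ Ustar n U, ∀ π ∈ B, (u ∈ pDes π ↔ δU u ∈ pDes (Ψ π))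
namespace DSAux

variable {n : ℕ}

/-- index of the block containing `x` -/
def idx (U : List (Finset (Fin n))) (x : Fin n) : ℕ := U.findIdx (fun s => decide (x ∈ s))

lemma idx_lt {U : List (Finset (Fin n))} (hcov : ∀ x : Fin n, ∃ s ∈ U, x ∈ s) (x : Fin n) :
    idx U x < U.length := by
  apply List.findIdx_lt_length_of_exists
  obtain ⟨s, hs, hx⟩ := hcov x
  exact ⟨s, hs, by simpa using hx⟩

lemma mem_idx {U : List (Finset (Fin n))} (hcov : ∀ x : Fin n, ∃ s ∈ U, x ∈ s) (x : Fin n) :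
    x ∈ U.get ⟨idx U x, idx_lt hcov x⟩ := by
  have := List.findIdx_getElem (w := idx_lt hcov x) (p := fun s => decide (x ∈ s)) (xs := U)
  exact of_decide_eq_true this

lemma disjoint_get {U : List (Finset (Fin n))} (hd : U.Pairwise Disjoint)
    {i j : ℕ} (hi : i < U.length) (hj : j < U.length) (hij : i ≠ j) :
    Disjoint (U.get ⟨i, hi⟩) (U.get ⟨j, hj⟩) := by
  rcases hij.lt_or_gt with h | h
  · exact List.pairwise_iff_get.mp hd ⟨i, hi⟩ ⟨j, hj⟩ h
  · exact (List.pairwise_iff_get.mp hd ⟨j, hj⟩ ⟨i, hi⟩ h).symm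

lemma idx_eq {U : List (Finset (Fin n))} (hd : U.Pairwise Disjoint)
    {x : Fin n} {j : ℕ} (hj : j < U.length) (hx : x ∈ U.get ⟨j, hj⟩) : idx U x = j := by
  have hlt : idx U x < U.length := by
    apply List.findIdx_lt_length_of_exists
    exact ⟨U.get ⟨j, hj⟩, List.get_mem U ⟨j, hj⟩, by simpa using hx⟩
  by_contra hne
  rcases Nat.lt_or_ge (idx U x) j with h | h
  · have := disjoint_get hd hlt hj (Nat.ne_of_lt h)
    have hx' : x ∈ U.get ⟨idx U x, hlt⟩ := by
      have := List.findIdx_getElem (w := hlt) (p := fun s => decide (x ∈ s)) (xs := U)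
      exact of_decide_eq_true this
    exact (Finset.disjoint_left.mp this hx') hx
  · have hjlt : j < idx U x := lt_of_le_of_ne h (fun h' => hne h'.symm)
    have := List.not_of_lt_findIdx (p := fun s => decide (x ∈ s)) (xs := U) hjlt
    simp only [List.get_eq_getElem] at hx
    simp [hx] at this

lemma sum_take_le (l : List ℕ) (i : ℕ) : (l.take i).sum ≤ l.sum := by
  conv_rhs => rw [← List.take_append_drop i l]
  rw [List.sum_append]; exact Nat.le_add_right _ _

lemma sum_take_mono (l : List ℕ) {i j : ℕ} (h : i ≤ j) : (l.take i).sum ≤ (l.take j).sum := by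
  have : l.take i = (l.take j).take i := by rw [List.take_take, Nat.min_eq_left h]
  rw [this]; exact sum_take_le _ _

/-- offset of block `j` -/
def off (U : List (Finset (Fin n))) (j : ℕ) : ℕ := ((U.map Finset.card).take j).sum

lemma off_succ {U : List (Finset (Fin n))} {j : ℕ} (hj : j < U.length) :
    off U (j + 1) = off U j + (U.get ⟨j, hj⟩).card := by
  unfold off
  rw [List.sum_take_succ _ _ (by simpa using hj)]
  simp

lemma off_mono {U : List (Finset (Fin n))} {i j : ℕ} (h : i ≤ j) : off U i ≤ off U j :=
  sum_take_mono _ h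


lemma mem_foldr_union {U : List (Finset (Fin n))} {x : Fin n} :
    x ∈ U.foldr (· ∪ ·) ∅ ↔ ∃ s ∈ U, x ∈ s := by
  induction U with
  | nil => simp
  | cons a l ih => simp [ih]

lemma sum_card (U : List (Finset (Fin n))) (hd : U.Pairwise Disjoint) :
    (U.map Finset.card).sum = (U.foldr (· ∪ ·) ∅).card := by
  induction U with
  | nil => simp
  | cons a l ih =>
    rw [List.pairwise_cons] at hd
    have hdisj : Disjoint a (l.foldr (· ∪ ·) ∅) := by
      rw [Finset.disjoint_right]
      intro x hx hxa
      obtain ⟨s, hs, hxs⟩ := mem_foldr_union.mp hx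
      exact (Finset.disjoint_left.mp (hd.1 s hs) hxa) hxs
    simp only [List.map_cons, List.sum_cons, List.foldr_cons]
    rw [ih hd.2, Finset.card_union_of_disjoint hdisj]

lemma sum_card_eq (U : List (Finset (Fin n))) (hU : OSPn n U) :
    (U.map Finset.card).sum = n := by
  rw [sum_card U hU.1]
  have : U.foldr (· ∪ ·) ∅ = (Finset.univ : Finset (Fin n)) := by
    ext x; simp [mem_foldr_union, hU.2.2 x]
  rw [this]; simp

/-- rank of `x` within a block -/
def rk (s : Finset (Fin n)) (x : Fin n) : ℕ := (s.filter (· < x)).card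

lemma rk_lt_card {s : Finset (Fin n)} {x : Fin n} (hx : x ∈ s) : rk s x < s.card := by
  have h1 : s.filter (· < x) ⊆ s.erase x := by
    intro y hy; rw [Finset.mem_filter] at hy
    exact Finset.mem_erase.mpr ⟨ne_of_lt hy.2, hy.1⟩
  calc rk s x ≤ (s.erase x).card := Finset.card_le_card h1
    _ < s.card := Finset.card_erase_lt_of_mem hx

lemma rk_strict {s : Finset (Fin n)} {x y : Fin n} (hx : x ∈ s) (hxy : x < y) :
    rk s x < rk s y := by
  apply Finset.card_lt_card
  constructor
  · intro z hz; rw [Finset.mem_filter] at hz ⊢; exact ⟨hz.1, lt_trans hz.2 hxy⟩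
  · intro hsub
    have : x ∈ s.filter (· < y) := Finset.mem_filter.mpr ⟨hx, hxy⟩
    have := hsub this
    rw [Finset.mem_filter] at this
    exact lt_irrefl x this.2

/-- the value of δ_U(x) as a natural number -/
def fnat (U : List (Finset (Fin n))) (x : Fin n) : ℕ :=
  off U (idx U x) + rk (U.getD (idx U x) ∅) x

/-- "y comes before x" in the order determined by U -/
def olt (U : List (Finset (Fin n))) (y x : Fin n) : Prop :=
  idx U y < idx U x ∨ (idx U y = idx U x ∧ y < x)

lemma getD_idx_eq {U : List (Finset (Fin n))} (hcov : ∀ x : Fin n, ∃ s ∈ U, x ∈ s) (x : Fin n) :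
    U.getD (idx U x) ∅ = U.get ⟨idx U x, idx_lt hcov x⟩ := by
  rw [List.getD_eq_getElem _ _ (idx_lt hcov x)]; simp

lemma fnat_lt_sum {U : List (Finset (Fin n))} (hU : OSPn n U) (x : Fin n) : fnat U x < n := by
  have hlt := idx_lt hU.2.2 x
  have hx := mem_idx hU.2.2 x
  have h1 : fnat U x < off U (idx U x + 1) := by
    rw [off_succ hlt, fnat, getD_idx_eq hU.2.2]
    exact Nat.add_lt_add_left (rk_lt_card hx) _
  have h2 : off U (idx U x + 1) ≤ off U U.length := off_mono hlt
  have h3 : off U U.length = n := by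
    rw [off, List.take_of_length_le (by simp), sum_card_eq U hU]
  omega

lemma olt_fnat {U : List (Finset (Fin n))} (hU : OSPn n U) {y x : Fin n} (h : olt U y x) :
    fnat U y < fnat U x := by
  rcases h with h | ⟨h1, h2⟩
  · have hy := mem_idx hU.2.2 y
    have h1 : fnat U y < off U (idx U y + 1) := by
      rw [off_succ (idx_lt hU.2.2 y), fnat, getD_idx_eq hU.2.2]
      exact Nat.add_lt_add_left (rk_lt_card hy) _
    have h2 : off U (idx U y + 1) ≤ off U (idx U x) := off_mono h
    have h3 : off U (idx U x) ≤ fnat U x := Nat.le_add_right _ _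
    omega
  · have hy := mem_idx hU.2.2 y
    unfold fnat
    rw [h1]
    apply Nat.add_lt_add_left (rk_strict _ h2) _
    rw [← h1, getD_idx_eq hU.2.2]
    exact hy

lemma olt_trichotomy (U : List (Finset (Fin n))) (x y : Fin n) (hne : y ≠ x) :
    olt U y x ∨ olt U x y := by
  rcases Nat.lt_trichotomy (idx U y) (idx U x) with h | h | h
  · exact Or.inl (Or.inl h)
  · rcases lt_or_gt_of_ne hne with h' | h'
    · exact Or.inl (Or.inr ⟨h, h'⟩)
    · exact Or.inr (Or.inr ⟨h.symm, h'⟩)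
  · exact Or.inr (Or.inl h)

lemma fnat_lt_iff {U : List (Finset (Fin n))} (hU : OSPn n U) {y x : Fin n} :
    fnat U y < fnat U x ↔ olt U y x := by
  constructor
  · intro h
    by_contra hno
    rcases eq_or_ne y x with rfl | hne
    · exact lt_irrefl _ h
    · rcases olt_trichotomy U x y hne with h' | h'
      · exact hno h'
      · exact absurd h (not_lt_of_gt (olt_fnat hU h'))
  · exact olt_fnat hU


lemma fnat_inj {U : List (Finset (Fin n))} (hU : OSPn n U) :
    Function.Injective (fnat U) := by
  intro x y h
  by_contra hne
  rcases olt_trichotomy U y x hne with h' | h' <;>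
    simpa [h] using olt_fnat hU h'

/-- the permutation δ_U -/
noncomputable def deltaOf {U : List (Finset (Fin n))} (hU : OSPn n U) : Equiv.Perm (Fin n) :=
  Equiv.ofBijective (fun x => (⟨fnat U x, fnat_lt_sum hU x⟩ : Fin n))
    (Finite.injective_iff_bijective.mp (fun x y h => fnat_inj hU (by simpa using congrArg Fin.val h)))

lemma deltaOf_val {U : List (Finset (Fin n))} (hU : OSPn n U) (x : Fin n) :
    (deltaOf hU x : ℕ) = fnat U x := rfl

lemma isDelta_deltaOf {U : List (Finset (Fin n))} (hU : OSPn n U) :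
    IsDelta (U.map Finset.card) U (deltaOf hU) := by
  intro i h
  constructor
  · intro x hx y hy hxy
    have : olt U x y := Or.inr ⟨by rw [idx_eq hU.1 h hx, idx_eq hU.1 h hy], hxy⟩
    have := olt_fnat hU this
    simpa [deltaOf, Fin.lt_def] using this
  · intro x hx
    have hidx : idx U x = i := idx_eq hU.1 h hx
    have hval : (deltaOf hU x : ℕ) = off U i + rk (U.get ⟨i, h⟩) x := by
      rw [deltaOf_val, fnat, hidx]
      congr 1
      rw [List.getD_eq_getElem _ _ (by simpa using h)]
      simp
    constructor
    · rw [hval]; exact Nat.le_add_right _ _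
    · rw [hval]
      have := off_succ h
      have hrk := rk_lt_card hx
      unfold off at *
      omega

lemma card_filter_lt (z : Fin n) :
    (Finset.univ.filter (· < z)).card = (z : ℕ) := by
  have himg : (Finset.univ.filter (· < z)).image Fin.val = Finset.range (z : ℕ) := by
    ext v
    simp only [Finset.mem_image, Finset.mem_filter, Finset.mem_univ, true_and,
      Finset.mem_range]
    constructor
    · rintro ⟨y, hy, rfl⟩; exact hy
    · intro hv; exact ⟨⟨v, lt_trans hv z.isLt⟩, hv, rfl⟩
  have := Finset.card_image_of_injective (Finset.univ.filter (· < z)) Fin.val_injective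
  rw [himg, Finset.card_range] at this
  omega

lemma val_eq_card {g : Fin n → Fin n} (hg : Function.Bijective g) (x : Fin n) :
    (g x : ℕ) = (Finset.univ.filter fun y => g y < g x).card := by
  have himg : (Finset.univ.filter fun y => g y < g x).image g
      = Finset.univ.filter (· < g x) := by
    ext v
    simp only [Finset.mem_image, Finset.mem_filter, Finset.mem_univ, true_and]
    constructor
    · rintro ⟨y, hy, rfl⟩; exact hy
    · intro hv; obtain ⟨y, rfl⟩ := hg.2 v; exact ⟨y, hv, rfl⟩
  have := Finset.card_image_of_injective (Finset.univ.filter fun y => g y < g x) hg.1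
  rw [himg, card_filter_lt] at this
  omega

lemma isDelta_lt_iff {U : List (Finset (Fin n))} (hU : OSPn n U) {δ : Equiv.Perm (Fin n)}
    (hδ : IsDelta (U.map Finset.card) U δ) {y x : Fin n} :
    δ y < δ x ↔ olt U y x := by
  have key : ∀ a b : Fin n, olt U a b → δ a < δ b := by
    intro a b hab
    have ha := mem_idx hU.2.2 a
    have hb := mem_idx hU.2.2 b
    rcases hab with h | ⟨h1, h2⟩
    · have hA := (hδ (idx U a) (idx_lt hU.2.2 a)).2 a ha
      have hB := (hδ (idx U b) (idx_lt hU.2.2 b)).2 b hb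
      have hmono : ((U.map Finset.card).take (idx U a + 1)).sum
          ≤ ((U.map Finset.card).take (idx U b)).sum := sum_take_mono _ h
      rw [Fin.lt_def]; omega
    · have hamem : a ∈ U.get ⟨idx U b, idx_lt hU.2.2 b⟩ := by
        have h' : a ∈ U.getD (idx U b) ∅ := by
          rw [← h1, getD_idx_eq hU.2.2]; exact ha
        rwa [List.getD_eq_getElem _ _ (by simpa using idx_lt hU.2.2 b)] at h'
      exact (hδ (idx U b) (idx_lt hU.2.2 b)).1 a hamem b hb h2
  constructor
  · intro h
    rcases eq_or_ne y x with rfl | hne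
    · exact absurd h (lt_irrefl _)
    · rcases olt_trichotomy U x y hne with h' | h'
      · exact h'
      · exact absurd h (not_lt_of_gt (key x y h'))
  · exact key y x

/-- any permutation satisfying `IsDelta` has value `fnat` -/
lemma isDelta_val {U : List (Finset (Fin n))} (hU : OSPn n U) {δ : Equiv.Perm (Fin n)}
    (hδ : IsDelta (U.map Finset.card) U δ) (x : Fin n) : (δ x : ℕ) = fnat U x := by
  have h1 := val_eq_card δ.bijective x
  have h2 := val_eq_card (g := fun x => (⟨fnat U x, fnat_lt_sum hU x⟩ : Fin n))
    (deltaOf hU).bijective x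
  have hset : (Finset.univ.filter fun y => δ y < δ x)
      = (Finset.univ.filter fun y => olt U y x) := by
    ext y; simp [isDelta_lt_iff hU hδ]
  have hset2 : (Finset.univ.filter fun y =>
      (⟨fnat U y, fnat_lt_sum hU y⟩ : Fin n) < ⟨fnat U x, fnat_lt_sum hU x⟩)
      = (Finset.univ.filter fun y => olt U y x) := by
    ext y; simp [Fin.lt_def, fnat_lt_iff hU]
  rw [hset] at h1
  rw [hset2] at h2
  simp only at h2
  rw [h1, ← h2]


lemma fnat_finSucc {U : List (Finset (Fin n))} (hU : OSPn n U) {u : Fin n}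
    (h1 : (u : ℕ) + 1 < n) {s : Finset (Fin n)} (hs : s ∈ U) (hus : u ∈ s)
    (hsu : finSucc u ∈ s) : fnat U (finSucc u) = fnat U u + 1 := by
  obtain ⟨j, hj⟩ := List.mem_iff_get.mp hs
  have hju : u ∈ U.get ⟨j.1, j.isLt⟩ := by simp only [Fin.eta, hj]; exact hus
  have hjsu : finSucc u ∈ U.get ⟨j.1, j.isLt⟩ := by simp only [Fin.eta, hj]; exact hsu
  have hiu : idx U u = j.1 := idx_eq hU.1 j.isLt hju
  have hisu : idx U (finSucc u) = j.1 := idx_eq hU.1 j.isLt hjsu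
  have hgetD : U.getD j.1 ∅ = s := by
    rw [List.getD_eq_getElem _ _ (by simpa using j.isLt)]
    simpa using hj
  have hfs : (finSucc u : ℕ) = (u : ℕ) + 1 := by
    simp [finSucc, Nat.mod_eq_of_lt h1]
  have hins : s.filter (· < finSucc u) = insert u (s.filter (· < u)) := by
    ext y
    simp only [Finset.mem_filter, Finset.mem_insert]
    constructor
    · rintro ⟨hy, hlt⟩
      rw [Fin.lt_def, hfs] at hlt
      rcases Nat.lt_succ_iff_lt_or_eq.mp hlt with h | h
      · exact Or.inr ⟨hy, by rwa [Fin.lt_def]⟩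
      · exact Or.inl (Fin.ext h)
    · rintro (rfl | ⟨hy, hlt⟩)
      · exact ⟨hus, by rw [Fin.lt_def, hfs]; omega⟩
      · refine ⟨hy, ?_⟩
        rw [Fin.lt_def] at hlt ⊢
        rw [hfs]; omega
  have hrk : rk s (finSucc u) = rk s u + 1 := by
    rw [rk, rk, hins, Finset.card_insert_of_notMem (by simp [Finset.mem_filter])]
  unfold fnat
  rw [hiu, hisu, hgetD, hrk]
  omega


lemma key (B : Multiset (Equiv.Perm (Fin n)))
    (H : ∀ P Q : Finset (Fin n), OSPn n [P, Q] →
        ∀ δ : Equiv.Perm (Fin n), IsDelta ([P, Q].map Finset.card) [P, Q] δ →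
          ∃ Ψ : Equiv.Perm (Fin n) → Equiv.Perm (Fin n), B.map Ψ = B ∧
            ∀ u ∈ Ustar n [P, Q], ∀ π ∈ B, (u ∈ pDes π ↔ δ u ∈ pDes (Ψ π))) :
    ∀ (k : ℕ) (U : List (Finset (Fin n))), U.length = k → OSPn n U →
      ∀ δU : Equiv.Perm (Fin n), IsDelta (U.map Finset.card) U δU →
        ∃ Ψ : Equiv.Perm (Fin n) → Equiv.Perm (Fin n), B.map Ψ = B ∧
          ∀ u ∈ Ustar n U, ∀ π ∈ B, (u ∈ pDes π ↔ δU u ∈ pDes (Ψ π)) := by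
  intro k
  induction k with
  | zero =>
    intro U hlen hU δU hδ
    rw [List.length_eq_zero_iff] at hlen
    subst hlen
    refine ⟨id, Multiset.map_id B, ?_⟩
    intro u hu
    simp [Ustar] at hu
  | succ k ih =>
    intro U hlen hU δU hδ
    rcases U with _ | ⟨A, U'⟩
    · simp at hlen
    rcases U' with _ | ⟨B', rest⟩
    · -- single block : δU = identity
      refine ⟨id, Multiset.map_id B, ?_⟩
      intro u hu π hπ
      have hA : A = Finset.univ := by
        ext x
        simp only [Finset.mem_univ, iff_true]
        obtain ⟨s, hs, hxs⟩ := hU.2.2 x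
        simp only [List.mem_singleton] at hs
        rwa [← hs]
      have hid : δU u = u := by
        apply Fin.ext
        rw [isDelta_val hU hδ]
        have hmem : u ∈ ([A] : List (Finset (Fin n))).get ⟨0, by simp⟩ := by
          simpa [hA] using Finset.mem_univ u
        have h0 : idx [A] u = 0 := idx_eq hU.1 (by simp) hmem
        rw [fnat, h0]
        simp only [off, List.take_zero, List.sum_nil, Nat.zero_add, List.getD_cons_zero]
        rw [hA, rk]
        exact card_filter_lt u
      rw [hid]
      simp
    · -- main case
      have hlenr : (((A ∪ B') :: rest) : List (Finset (Fin n))).length = k := by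
        simpa using Nat.succ_injective hlen
      have hpw := hU.1
      rw [List.pairwise_cons] at hpw
      have hpw2 := hpw.2
      rw [List.pairwise_cons] at hpw2
      have hV : OSPn n ((A ∪ B') :: rest) := by
        refine ⟨?_, ?_, ?_⟩
        · rw [List.pairwise_cons]
          refine ⟨?_, hpw2.2⟩
          intro s hs
          exact Finset.disjoint_union_left.mpr
            ⟨hpw.1 s (List.mem_cons_of_mem _ hs), hpw2.1 s hs⟩
        · intro s hs
          rcases List.mem_cons.mp hs with rfl | hs
          · obtain ⟨a, ha⟩ := hU.2.1 A (by simp)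
            exact ⟨a, Finset.mem_union_left _ ha⟩
          · exact hU.2.1 s (by simp [hs])
        · intro x
          obtain ⟨s, hs, hxs⟩ := hU.2.2 x
          rcases List.mem_cons.mp hs with h | hs
          · exact ⟨A ∪ B', by simp, by rw [h] at hxs; exact Finset.mem_union_left _ hxs⟩
          · rcases List.mem_cons.mp hs with h | hs
            · exact ⟨A ∪ B', by simp, by rw [h] at hxs; exact Finset.mem_union_right _ hxs⟩
            · exact ⟨s, by simp [hs], hxs⟩
      obtain ⟨Ψ₁, hΨ₁, hcond₁⟩ := ih ((A ∪ B') :: rest) hlenr hV (deltaOf hV) (isDelta_deltaOf hV)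
      have hnotP : ∀ z : Fin n, z ∉ A → deltaOf hV z ∉ A.image (deltaOf hV) := by
        intro z hz hmem
        obtain ⟨a, ha, hae⟩ := Finset.mem_image.mp hmem
        exact hz (by rwa [← (deltaOf hV).injective hae])
      have hPQ : OSPn n [A.image (deltaOf hV), (A.image (deltaOf hV))ᶜ] := by
        refine ⟨?_, ?_, ?_⟩
        · simp [List.pairwise_cons, disjoint_compl_right]
        · intro s hs
          rcases List.mem_cons.mp hs with rfl | hs
          · obtain ⟨a, ha⟩ := hU.2.1 A (by simp)
            exact ⟨deltaOf hV a, Finset.mem_image_of_mem _ ha⟩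
          · simp only [List.mem_singleton] at hs
            subst hs
            obtain ⟨b, hb⟩ := hU.2.1 B' (by simp)
            have hbA : b ∉ A := Finset.disjoint_right.mp (hpw.1 B' (by simp)) hb
            exact ⟨deltaOf hV b, Finset.mem_compl.mpr (hnotP b hbA)⟩
        · intro x
          by_cases hx : x ∈ A.image (deltaOf hV)
          · exact ⟨A.image (deltaOf hV), by simp, hx⟩
          · exact ⟨(A.image (deltaOf hV))ᶜ, by simp, Finset.mem_compl.mpr hx⟩
      obtain ⟨Ψ₂, hΨ₂, hcond₂⟩ :=
        H (A.image (deltaOf hV)) (A.image (deltaOf hV))ᶜ hPQ (deltaOf hPQ) (isDelta_deltaOf hPQ)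
      refine ⟨Ψ₂ ∘ Ψ₁, ?_, ?_⟩
      · rw [← Multiset.map_map, hΨ₁, hΨ₂]
      intro u hu π hπ
      simp only [Ustar, Finset.mem_filter, Finset.mem_univ, true_and] at hu
      obtain ⟨hu1, s, hs, hus, hssu⟩ := hu
      have hcase : (u ∈ A ∧ finSucc u ∈ A) ∨ (u ∉ A ∧ finSucc u ∉ A) := by
        rcases List.mem_cons.mp hs with h | hs'
        · rw [h] at hus hssu
          exact Or.inl ⟨hus, hssu⟩
        · have hd := hpw.1 s hs'
          exact Or.inr ⟨Finset.disjoint_right.mp hd hus, Finset.disjoint_right.mp hd hssu⟩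
      have hu_V : u ∈ Ustar n ((A ∪ B') :: rest) := by
        simp only [Ustar, Finset.mem_filter, Finset.mem_univ, true_and]
        refine ⟨hu1, ?_⟩
        rcases List.mem_cons.mp hs with h | hs'
        · rw [h] at hus hssu
          exact ⟨A ∪ B', by simp, Finset.mem_union_left _ hus, Finset.mem_union_left _ hssu⟩
        · rcases List.mem_cons.mp hs' with h | hs''
          · rw [h] at hus hssu
            exact ⟨A ∪ B', by simp, Finset.mem_union_right _ hus, Finset.mem_union_right _ hssu⟩
          · exact ⟨s, by simp [hs''], hus, hssu⟩
      have hπ₁ : Ψ₁ π ∈ B := by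
        rw [← hΨ₁]; exact Multiset.mem_map_of_mem _ hπ
      obtain ⟨_, sV, hsV, husV, hssuV⟩ := by
        simpa only [Ustar, Finset.mem_filter, Finset.mem_univ, true_and] using hu_V
      have hfnat : fnat ((A ∪ B') :: rest) (finSucc u) = fnat ((A ∪ B') :: rest) u + 1 :=
        fnat_finSucc hV hu1 hsV husV hssuV
      have hδVval : ∀ z : Fin n, (deltaOf hV z : ℕ) = fnat ((A ∪ B') :: rest) z := fun z => rfl
      have hlt : fnat ((A ∪ B') :: rest) u + 1 < n := by
        rw [← hfnat]; exact fnat_lt_sum hV (finSucc u)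
      have hsucc : deltaOf hV (finSucc u) = finSucc (deltaOf hV u) := by
        apply Fin.ext
        rw [hδVval, hfnat]
        simp only [finSucc, hδVval]
        rw [Nat.mod_eq_of_lt hlt]
      have hn₂ : (deltaOf hV u : ℕ) + 1 < n := by rw [hδVval]; exact hlt
      have hu₂ : deltaOf hV u ∈ Ustar n [A.image (deltaOf hV), (A.image (deltaOf hV))ᶜ] := by
        simp only [Ustar, Finset.mem_filter, Finset.mem_univ, true_and]
        refine ⟨hn₂, ?_⟩
        rcases hcase with ⟨h1, h2⟩ | ⟨h1, h2⟩
        · exact ⟨A.image (deltaOf hV), by simp, Finset.mem_image_of_mem _ h1,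
            by rw [← hsucc]; exact Finset.mem_image_of_mem _ h2⟩
        · refine ⟨(A.image (deltaOf hV))ᶜ, by simp, Finset.mem_compl.mpr (hnotP u h1), ?_⟩
          rw [← hsucc]
          exact Finset.mem_compl.mpr (hnotP _ h2)
      have step1 := hcond₁ u hu_V π hπ
      have step2 := hcond₂ (deltaOf hV u) hu₂ (Ψ₁ π) hπ₁
      have hidx : ∀ z : Fin n, idx ((A ∪ B') :: rest) z = idx (A :: B' :: rest) z - 1 ∧
          idx [A.image (deltaOf hV), (A.image (deltaOf hV))ᶜ] (deltaOf hV z)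
            = (if idx (A :: B' :: rest) z = 0 then 0 else 1) := by
        intro z
        obtain ⟨s', hs', hzs'⟩ := hU.2.2 z
        rcases List.mem_cons.mp hs' with h | hs2
        · rw [h] at hzs'
          have h0 : idx (A :: B' :: rest) z = 0 := idx_eq hU.1 (by simp)
            (show z ∈ (A :: B' :: rest).get ⟨0, by simp⟩ from hzs')
          have hV0 : idx ((A ∪ B') :: rest) z = 0 := idx_eq hV.1 (by simp)
            (show z ∈ ((A ∪ B') :: rest).get ⟨0, by simp⟩ from Finset.mem_union_left _ hzs')
          have hP0 : idx [A.image (deltaOf hV), (A.image (deltaOf hV))ᶜ] (deltaOf hV z) = 0 :=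
            idx_eq hPQ.1 (by simp)
              (show _ ∈ ([A.image (deltaOf hV), (A.image (deltaOf hV))ᶜ]).get ⟨0, by simp⟩ from
                Finset.mem_image_of_mem _ hzs')
          simp [h0, hV0, hP0]
        · rcases List.mem_cons.mp hs2 with h | hs3
          · rw [h] at hzs'
            have h0 : idx (A :: B' :: rest) z = 1 := idx_eq hU.1 (by simp)
              (show z ∈ (A :: B' :: rest).get ⟨1, by simp⟩ from hzs')
            have hV0 : idx ((A ∪ B') :: rest) z = 0 := idx_eq hV.1 (by simp)
              (show z ∈ ((A ∪ B') :: rest).get ⟨0, by simp⟩ from Finset.mem_union_right _ hzs')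
            have hzA : z ∉ A := Finset.disjoint_right.mp (hpw.1 B' (by simp)) hzs'
            have hP1 : idx [A.image (deltaOf hV), (A.image (deltaOf hV))ᶜ] (deltaOf hV z) = 1 :=
              idx_eq hPQ.1 (by simp)
                (show _ ∈ ([A.image (deltaOf hV), (A.image (deltaOf hV))ᶜ]).get ⟨1, by simp⟩ from
                  Finset.mem_compl.mpr (hnotP z hzA))
            simp [h0, hV0, hP1]
          · obtain ⟨m, hm⟩ := List.mem_iff_get.mp hs3
            have hmlt : m.1 + 2 < (A :: B' :: rest).length := by
              have := m.isLt; simp only [List.length_cons]; omega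
            have hmU : z ∈ (A :: B' :: rest).get ⟨m.1 + 2, hmlt⟩ := by
              have : (A :: B' :: rest).get ⟨m.1 + 2, hmlt⟩ = rest.get m := by
                simp [List.get_eq_getElem]
              rw [this, hm]; exact hzs'
            have h0 : idx (A :: B' :: rest) z = m.1 + 2 := idx_eq hU.1 hmlt hmU
            have hmltV : m.1 + 1 < ((A ∪ B') :: rest).length := by
              have := m.isLt; simp only [List.length_cons]; omega
            have hmV : z ∈ ((A ∪ B') :: rest).get ⟨m.1 + 1, hmltV⟩ := by
              have : ((A ∪ B') :: rest).get ⟨m.1 + 1, hmltV⟩ = rest.get m := by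
                simp [List.get_eq_getElem]
              rw [this, hm]; exact hzs'
            have hV0 : idx ((A ∪ B') :: rest) z = m.1 + 1 := idx_eq hV.1 hmltV hmV
            have hzA : z ∉ A :=
              Finset.disjoint_right.mp (hpw.1 s' (List.mem_cons_of_mem _ hs3)) hzs'
            have hP1 : idx [A.image (deltaOf hV), (A.image (deltaOf hV))ᶜ] (deltaOf hV z) = 1 :=
              idx_eq hPQ.1 (by simp)
                (show _ ∈ ([A.image (deltaOf hV), (A.image (deltaOf hV))ᶜ]).get ⟨1, by simp⟩ from
                  Finset.mem_compl.mpr (hnotP z hzA))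
            simp [h0, hV0, hP1]
      have hcomp : ∀ y x : Fin n,
          (deltaOf hPQ (deltaOf hV y) < deltaOf hPQ (deltaOf hV x) ↔ olt (A :: B' :: rest) y x) := by
        intro y x
        rw [isDelta_lt_iff hPQ (isDelta_deltaOf hPQ)]
        unfold olt
        rw [isDelta_lt_iff hV (isDelta_deltaOf hV)]
        unfold olt
        rw [(hidx y).1, (hidx y).2, (hidx x).1, (hidx x).2]
        simp only [Fin.lt_def]
        split_ifs <;> simp only [false_and, and_false, or_false, false_or, true_and, and_true] <;> omega
      have step3 : deltaOf hPQ (deltaOf hV u) = δU u := by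
        apply Fin.ext
        have hbij : Function.Bijective (fun z : Fin n => deltaOf hPQ (deltaOf hV z)) :=
          ((deltaOf hV).trans (deltaOf hPQ)).bijective
        have e1 := val_eq_card δU.bijective u
        have e2 := val_eq_card hbij u
        rw [e1, e2]
        congr 1
        ext y
        simp only [Finset.mem_filter, Finset.mem_univ, true_and]
        rw [isDelta_lt_iff hU hδ, hcomp]
      rw [Function.comp_apply]
      rw [step1, step2, step3]

end DSAux

/-- `B` is `D`-symmetric iff the defining condition holds for all
ordered set partitions `(U, V)` of `[n]` into exactly two blocks. -/
theorem dsymm_iff_two_blocks (n : ℕ) (B : Multiset (Equiv.Perm (Fin n))) :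
    DSymm n B ↔
      ∀ U V : Finset (Fin n), OSPn n [U, V] →
        ∀ δ : Equiv.Perm (Fin n), IsDelta ([U, V].map Finset.card) [U, V] δ →
          ∃ Ψ : Equiv.Perm (Fin n) → Equiv.Perm (Fin n), B.map Ψ = B ∧
            ∀ u ∈ Ustar n [U, V], ∀ π ∈ B, (u ∈ pDes π ↔ δ u ∈ pDes (Ψ π)) := by
  constructor
  · intro h U V h2 δ h3
    exact h [U, V] h2 δ h3
  · intro H U hU δU hδ
    exact DSAux.key B H U.length U rfl hU δU hδ
end

section
/- For any ordered set partition U of [n] of type a composition α of n, the sets r(U) = [n-1] \ U* and s(U) = [n-1] \ δ_U(U*) correspond to compositions of n that are rearrangements of each other. -/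
open scoped Classical

/-- run length of `Q` strictly below `x`. -/
noncomputable def Rrun (Q : ℕ → Prop) : ℕ → ℕ
  | 0 => 0
  | (x+1) => if Q x then Rrun Q x + 1 else 0

theorem zipWith_trunc {α : Type} (f : α → α → α) : ∀ (l₁ l₂ l₃ : List α),
    l₁.length ≤ l₂.length →
    List.zipWith f l₁ (l₂ ++ l₃) = List.zipWith f l₁ l₂ := by
  intro l₁
  induction l₁ with
  | nil => simp
  | cons a l ih =>
      intro l₂ l₃ h
      cases l₂ with
      | nil => simp at h
      | cons b l₂ =>
          simp only [List.cons_append, List.zipWith_cons_cons]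
          rw [ih l₂ l₃ (by simpa using h)]

theorem Rrun_run (Q : ℕ → Prop) (p : ℕ) (hp : p = 0 ∨ ¬ Q (p-1)) :
    ∀ e, p ≤ e → (∀ x, p ≤ x → x < e → Q x) → Rrun Q e = e - p := by
  intro e
  induction e with
  | zero =>
      intro h _
      interval_cases p
      simp [Rrun]
  | succ e ih =>
      intro hpe hall
      rcases eq_or_lt_of_le hpe with h | h
      · have hp' : ¬ Q e := by
          rcases hp with h0 | h0
          · omega
          · have : p - 1 = e := by omega
            rwa [this] at h0
        rw [Rrun, if_neg hp']
        omega
      · have hQe : Q e := hall e (by omega) (by omega)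
        rw [Rrun, if_pos hQe, ih (by omega) (fun x hx hx' => hall x hx (by omega))]
        omega

theorem lemL (Q : ℕ → Prop) :
    ∀ (E : List ℕ) (p : ℕ),
      (p = 0 ∨ ¬ Q (p-1)) →
      (∀ e ∈ E, ¬ Q e ∧ p ≤ e) →
      (∀ x, p ≤ x → (∃ e ∈ E, x < e) → (Q x ∨ x ∈ E)) →
      E.Pairwise (· < ·) →
      List.zipWith (· - ·) (E.map (· + 1)) (p :: E.map (· + 1)) =
        E.map (fun e => Rrun Q e + 1) := by
  intro E
  induction E with
  | nil => simp
  | cons e E ih =>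
      intro p h0 h1 h2 h3
      have hpe : p ≤ e := (h1 e (by simp)).2
      have hQe : ¬ Q e := (h1 e (by simp)).1
      have hrun : Rrun Q e = e - p := by
        apply Rrun_run Q p h0 e hpe
        intro x hx hx'
        rcases h2 x hx ⟨e, by simp, hx'⟩ with h | h
        · exact h
        · rcases List.mem_cons.mp h with h | h
          · omega
          · have := (List.pairwise_cons.mp h3).1 x h
            omega
      have hsorted := List.pairwise_cons.mp h3
      simp only [List.map_cons, List.zipWith_cons_cons]
      have hhead : e + 1 - p = Rrun Q e + 1 := by rw [hrun]; omega
      rw [hhead]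
      congr 1
      refine ih (e+1) ?_ ?_ ?_ hsorted.2
      · right; simpa using hQe
      · intro e' he'
        exact ⟨(h1 e' (by simp [he'])).1, hsorted.1 e' he'⟩
      · rintro x hx ⟨e'', he'', hx'⟩
        rcases h2 x (by omega) ⟨e'', by simp [he''], hx'⟩ with h | h
        · exact Or.inl h
        · rcases List.mem_cons.mp h with h | h
          · omega
          · exact Or.inr h

theorem flatMap_pure {α β : Type*} (L : List α) (f : α → β) :
    L.flatMap (fun a => [f a]) = L.map f := by
  induction L with
  | nil => rfl
  | cons a L ih => simp [List.flatMap_cons, ih]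

theorem lemP (n : ℕ) (hn : 1 ≤ n) (S : Finset (Fin n)) (hS : ∀ i ∈ S, (i:ℕ)+1 < n) :
    compM n (Finset.univ.filter fun i : Fin n => (i:ℕ)+1 < n ∧ i ∉ S) =
      Sᶜ.val.map (fun i : Fin n =>
        Rrun (fun m => ∃ j ∈ S, (j:ℕ) = m) (i:ℕ) + 1) := by
  set Q : ℕ → Prop := fun m => ∃ j ∈ S, (j:ℕ) = m with hQ
  set J : Finset (Fin n) := Finset.univ.filter fun i : Fin n => (i:ℕ)+1 < n ∧ i ∉ S with hJ
  set lm : List ℕ := (J.sort (· ≤ ·)).map Fin.val with hlm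
  set E : List ℕ := lm ++ [n-1] with hE
  have hmemJ : ∀ i : Fin n, i ∈ J ↔ ((i:ℕ)+1 < n ∧ i ∉ S) := by
    intro i; simp [hJ]
  have hmemlm : ∀ x : ℕ, x ∈ lm ↔ ∃ i : Fin n, i ∈ J ∧ (i:ℕ) = x := by
    intro x
    rw [hlm, List.mem_map]
    constructor
    · rintro ⟨i, hi, rfl⟩; exact ⟨i, (Finset.mem_sort _).mp hi, rfl⟩
    · rintro ⟨i, hi, rfl⟩; exact ⟨i, (Finset.mem_sort _).mpr hi, rfl⟩
  -- step 1 : compList as zipWith over E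
  have step1 : compList n J =
      List.zipWith (· - ·) (E.map (· + 1)) (0 :: E.map (· + 1)) := by
    have hcl : compList n J =
        List.zipWith (· - ·) ((lm.map (· + 1)) ++ [n]) (0 :: lm.map (· + 1)) := by
      rw [hlm]
      simp only [compList, List.pure_def, List.bind_eq_flatMap]
      rw [flatMap_pure]
    have hmm : E.map (· + 1) = (lm.map (· + 1)) ++ [n] := by
      rw [hE, List.map_append]
      congr 1
      simp only [List.map_cons, List.map_nil]
      congr 1
      omega
    rw [hcl, show (0 :: E.map (· + 1)) = (0 :: lm.map (· + 1)) ++ [n] by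
      rw [hmm]; simp, hmm]
    rw [zipWith_trunc _ _ _ _ (by simp)]
  -- step 2 : lemL
  have hlub : ∀ e ∈ E, e ≤ n - 1 := by
    intro e he
    rcases List.mem_append.mp he with h | h
    · obtain ⟨i, hi, rfl⟩ := (hmemlm e).mp h
      have := i.isLt; omega
    · simp at h; omega
  have step2 : List.zipWith (· - ·) (E.map (· + 1)) (0 :: E.map (· + 1)) =
      E.map (fun e => Rrun Q e + 1) := by
    apply lemL
    · left; rfl
    · intro e he
      refine ⟨?_, Nat.zero_le _⟩
      rcases List.mem_append.mp he with h | h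
      · obtain ⟨i, hi, rfl⟩ := (hmemlm e).mp h
        rintro ⟨j, hj, hji⟩
        have : j = i := Fin.ext hji
        exact ((hmemJ i).mp hi).2 (this ▸ hj)
      · simp at h
        rintro ⟨j, hj, hje⟩
        have := hS j hj; omega
    · rintro x hx ⟨e, he, hxe⟩
      have hxn : x < n - 1 := lt_of_lt_of_le hxe (hlub e he)
      by_cases hiS : (⟨x, by omega⟩ : Fin n) ∈ S
      · exact Or.inl ⟨⟨x, by omega⟩, hiS, rfl⟩
      · right
        apply List.mem_append.mpr
        left
        exact (hmemlm x).mpr ⟨⟨x, by omega⟩, (hmemJ _).mpr ⟨by simp; omega, hiS⟩, rfl⟩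
    · -- pairwise <
      apply List.pairwise_append.mpr
      refine ⟨?_, by simp, ?_⟩
      · rw [hlm]
        have := (Finset.sortedLT_sort J).pairwise
        exact List.Pairwise.map _ (fun a b h => by exact_mod_cast h) this
      · intro x hx y hy
        simp at hy; subst hy
        obtain ⟨i, hi, rfl⟩ := (hmemlm x).mp hx
        have := ((hmemJ i).mp hi).1
        omega
  -- step 3 : to multisets
  have htop : (⟨n-1, by omega⟩ : Fin n) ∉ J := by
    intro hmem
    have := ((hmemJ _).mp hmem).1
    simp at this
    omega
  have hcompl : Sᶜ = insert (⟨n-1, by omega⟩ : Fin n) J := by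
    ext i
    simp only [Finset.mem_compl, Finset.mem_insert, hmemJ]
    constructor
    · intro h
      by_cases h1 : (i:ℕ)+1 < n
      · exact Or.inr ⟨h1, h⟩
      · left; apply Fin.ext; simp; omega
    · rintro (rfl | ⟨h1, h2⟩)
      · intro hmem; have := hS _ hmem; simp at this; omega
      · exact h2
  have hJm : Multiset.map (fun i : Fin n => Rrun Q (i:ℕ) + 1) J.val =
      ((lm.map fun e => Rrun Q e + 1 : List ℕ) : Multiset ℕ) := by
    rw [← Finset.sort_eq J (· ≤ ·), Multiset.map_coe, hlm, List.map_map]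
    rfl
  rw [compM, step1, step2, hcompl, Finset.insert_val_of_notMem htop,
    Multiset.map_cons, hJm, hE, List.map_append, ← Multiset.coe_add,
    List.map_cons, List.map_nil, Multiset.coe_singleton, add_comm,
    Multiset.singleton_add]

theorem lemK (n : ℕ) (S : Finset (Fin n)) (δ : Equiv.Perm (Fin n))
    (hd : ∀ i ∈ S, (i:ℕ)+1 < n ∧ ((δ (finSucc i)):ℕ) = (δ i:ℕ) + 1) :
    ∀ (m : ℕ) (x : Fin n), (x:ℕ) = m →
      Rrun (fun k => ∃ j ∈ S, ((δ j):ℕ) = k) ((δ x : Fin n):ℕ) =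
      Rrun (fun k => ∃ j ∈ S, (j:ℕ) = k) ((x : Fin n):ℕ) := by
  intro m
  set Q : ℕ → Prop := fun k => ∃ j ∈ S, (j:ℕ) = k with hQ
  set Q' : ℕ → Prop := fun k => ∃ j ∈ S, ((δ j):ℕ) = k with hQ'
  have hsucc : ∀ j ∈ S, (finSucc j : ℕ) = (j:ℕ) + 1 := by
    intro j hj
    have := (hd j hj).1
    simp [finSucc, Nat.mod_eq_of_lt this]
  have hnotQ' : ∀ (x : Fin n), (¬ ∃ j ∈ S, (j:ℕ) + 1 = (x:ℕ)) →
      Rrun Q' ((δ x : Fin n):ℕ) = 0 := by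
    intro x hx
    cases hdx : ((δ x : Fin n):ℕ) with
    | zero => simp [Rrun]
    | succ k =>
        rw [Rrun, if_neg]
        rintro ⟨j, hj, hjk⟩
        have h1 : ((δ (finSucc j)):ℕ) = ((δ x : Fin n):ℕ) := by
          rw [(hd j hj).2, hjk, hdx]
        have h2 : finSucc j = x := δ.injective (Fin.ext h1)
        exact hx ⟨j, hj, by rw [← hsucc j hj, h2]⟩
  induction m with
  | zero =>
      intro x hx
      rw [hx, Rrun]
      apply hnotQ' x
      rintro ⟨j, hj, hjx⟩
      omega
  | succ m ih =>
      intro x hx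
      by_cases hq : ∃ j ∈ S, (j:ℕ) = m
      · obtain ⟨j, hjS, hjm⟩ := hq
        have hfs : finSucc j = x := by
          apply Fin.ext
          rw [hsucc j hjS, hjm, hx]
        have hdx : ((δ x : Fin n):ℕ) = ((δ j : Fin n):ℕ) + 1 := by
          rw [← hfs, (hd j hjS).2]
        rw [hx, hdx, Rrun, Rrun, if_pos ⟨j, hjS, rfl⟩, if_pos ⟨j, hjS, hjm⟩]
        rw [ih j hjm]
        rw [hjm]
      · rw [hx, Rrun, if_neg hq]
        apply hnotQ' x
        rintro ⟨j, hj, hjx⟩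
        exact hq ⟨j, hj, by omega⟩

theorem Rrun_congr {Q Q' : ℕ → Prop} (h : ∀ m, Q m ↔ Q' m) : ∀ x, Rrun Q x = Rrun Q' x := by
  have : Q = Q' := funext fun m => propext (h m)
  subst this
  intro x; rfl

theorem Tmono (L : List ℕ) : ∀ {b c : ℕ}, b ≤ c → (L.take b).sum ≤ (L.take c).sum := by
  intro b c h
  induction c with
  | zero => simp_all
  | succ c ih =>
      rcases Nat.lt_or_ge b (c+1) with h' | h'
      · have hb : b ≤ c := by omega
        refine le_trans (ih hb) ?_
        rcases Nat.lt_or_ge c L.length with hc | hc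
        · rw [List.sum_take_succ _ _ hc]
          omega
        · rw [List.take_of_length_le hc, List.take_of_length_le (by omega)]
      · have : b = c + 1 := by omega
        subst this
        rfl

theorem delta_consec (n : ℕ) (U : List (Finset (Fin n))) (hU : OSPn n U)
    (δ : Equiv.Perm (Fin n)) (hδ : IsDelta (U.map Finset.card) U δ) :
    ∀ i ∈ Ustar n U, (i:ℕ)+1 < n ∧ ((δ (finSucc i)):ℕ) = (δ i:ℕ) + 1 := by
  intro i hi
  rw [Ustar, Finset.mem_filter] at hi
  obtain ⟨-, h1, s, hsU, his, hi1s⟩ := hi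
  refine ⟨h1, ?_⟩
  obtain ⟨b, hb⟩ : ∃ b : Fin U.length, U.get b = s := List.mem_iff_get.mp hsU
  have hδb := hδ b.1 b.2
  rw [Fin.eta, hb] at hδb
  have hfs : (finSucc i : ℕ) = (i:ℕ) + 1 := by
    simp [finSucc, Nat.mod_eq_of_lt h1]
  have hlt : i < finSucc i := by
    rw [Fin.lt_def, hfs]; omega
  have h2 : δ i < δ (finSucc i) := hδb.1 i his _ hi1s hlt
  rw [Fin.lt_def] at h2
  by_contra hne
  have h3 : (δ i : ℕ) + 1 < (δ (finSucc i) : ℕ) := by omega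
  set v : Fin n := ⟨(δ i : ℕ) + 1, lt_trans h3 (δ (finSucc i)).isLt⟩ with hv
  set z : Fin n := δ.symm v with hz
  have hzv : δ z = v := δ.apply_symm_apply v
  obtain ⟨t, htU, hzt⟩ := hU.2.2 z
  obtain ⟨c, hc⟩ : ∃ c : Fin U.length, U.get c = t := List.mem_iff_get.mp htU
  have hδc := hδ c.1 c.2
  rw [Fin.eta, hc] at hδc
  have hbz := hδc.2 z hzt
  have hbi := hδb.2 i his
  have hbi1 := hδb.2 _ hi1s
  rw [hzv] at hbz
  have hvv : (v : ℕ) = (δ i : ℕ) + 1 := rfl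
  set L : List ℕ := U.map Finset.card with hL
  have hbc : b.1 = c.1 := by
    by_contra hbc
    rcases Nat.lt_or_ge b.1 c.1 with h' | h'
    · have := Tmono L (show b.1 + 1 ≤ c.1 by omega)
      omega
    · have h'' : c.1 < b.1 := by omega
      have := Tmono L (show c.1 + 1 ≤ b.1 by omega)
      omega
  have hts : t = s := by
    rw [← hb, ← hc]
    congr 1
    exact Fin.ext hbc.symm
  rw [hts] at hzt
  -- now z ∈ s with δ i < δ z < δ (finSucc i)
  have hzi : z ≠ i := by
    intro h; rw [h] at hzv
    have : (δ i : ℕ) = (v:ℕ) := by rw [hzv]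
    omega
  have hzi1 : z ≠ finSucc i := by
    intro h; rw [h] at hzv
    have : (δ (finSucc i) : ℕ) = (v:ℕ) := by rw [hzv]
    omega
  rcases lt_or_gt_of_ne hzi with h' | h'
  · have := hδb.1 z hzt i his h'
    rw [Fin.lt_def, hzv] at this
    omega
  · rcases lt_or_gt_of_ne hzi1 with h'' | h''
    · have hn1 : (i:ℕ) < (z:ℕ) := h'
      have hn2 : (z:ℕ) < ((finSucc i):ℕ) := h''
      omega
    · have := hδb.1 _ hi1s z hzt h''
      rw [Fin.lt_def, hzv] at this
      omega

/-- For any ordered set partition `U` of `[n]`, the subsets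
`r(U) = [n-1] \ U*` and `s(U) = [n-1] \ δ_U(U*)` of `[n-1]` correspond to
compositions of `n` that are rearrangements of each other. -/
theorem r_sim_s (n : ℕ) (U : List (Finset (Fin n))) (hU : OSPn n U)
    (δ : Equiv.Perm (Fin n)) (hδ : IsDelta (U.map Finset.card) U δ) :
    compM n (Finset.univ.filter fun i : Fin n =>
        (i : ℕ) + 1 < n ∧ i ∉ Ustar n U) =
    compM n (Finset.univ.filter fun i : Fin n =>
        (i : ℕ) + 1 < n ∧ ∀ u ∈ Ustar n U, δ u ≠ i) := by
  rcases Nat.eq_zero_or_pos n with rfl | hn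
  · have he : (Finset.univ : Finset (Fin 0)) = ∅ := rfl
    rw [he, Finset.filter_empty, Finset.filter_empty]
  · set S := Ustar n U with hSdef
    have hd := delta_consec n U hU δ hδ
    have hSg : ∀ i ∈ S, (i:ℕ)+1 < n := fun i hi => (hd i hi).1
    set S' : Finset (Fin n) := S.image δ with hS'
    have hS'g : ∀ i ∈ S', (i:ℕ)+1 < n := by
      intro i hi
      rw [hS', Finset.mem_image] at hi
      obtain ⟨j, hj, rfl⟩ := hi
      have h1 := (hd j hj).2
      have h2 := (δ (finSucc j)).isLt
      omega
    have hrw : (Finset.univ.filter fun i : Fin n => (i:ℕ)+1 < n ∧ ∀ u ∈ S, δ u ≠ i)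
        = Finset.univ.filter fun i : Fin n => (i:ℕ)+1 < n ∧ i ∉ S' := by
      apply Finset.filter_congr
      intro i _
      have : (∀ u ∈ S, δ u ≠ i) ↔ i ∉ S' := by
        rw [hS']
        simp [Finset.mem_image]
      rw [this]
    rw [hrw, lemP n hn S hSg, lemP n hn S' hS'g]
    have hmapc : S'ᶜ = Sᶜ.map δ.toEmbedding := by
      ext i
      simp only [Finset.mem_compl, Finset.mem_map, hS', Finset.mem_image,
        Equiv.coe_toEmbedding]
      constructor
      · intro h
        exact ⟨δ.symm i, fun hm => h ⟨δ.symm i, hm, δ.apply_symm_apply i⟩,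
          δ.apply_symm_apply i⟩
      · rintro ⟨j, hj, rfl⟩ ⟨k, hk, hkj⟩
        exact hj (δ.injective hkj ▸ hk)
    rw [hmapc, Finset.map_val, Multiset.map_map]
    apply Multiset.map_congr rfl
    intro x hx
    simp only [Function.comp, Equiv.coe_toEmbedding]
    have hQeq : (fun m => ∃ j ∈ S', ((j : Fin n):ℕ) = m)
        = (fun m => ∃ j ∈ S, ((δ j : Fin n):ℕ) = m) := by
      funext m
      apply propext
      rw [hS']
      simp [Finset.mem_image]
    rw [hQeq]
    rw [lemK n S δ hd (x:ℕ) x rfl]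
end

section
/- Suppose λ ⊢ n and nonnegative reals C_α are given for each composition α that is a rearrangement of λ. If for each such α and each k ≤ n one has |S_k(α)|·C_α = Σ_{I ∈ S_k(α)} C_{α(I)}, where S_k(α) is the set of subsets I of positions of α with Σ_{i∈I} α_i = k and α(I) is the composition listing the parts indexed by I (in order) followed by the remaining parts (in order), then all the C_α are equal. -/
open scoped Classical
/-- `S_k(α)`: the sets `I` of positions of the composition `α` with `Σ_{i∈I} α_i = k`. -/
noncomputable def Sk (α : List ℕ) (k : ℕ) : Finset (Finset (Fin α.length)) :=
  Finset.univ.filter fun I => ∑ i ∈ I, α.get i = k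

/-- `α(I)`: the parts of `α` indexed by `I` (in order) followed by the remaining parts
(in order). -/
def rearr (α : List ℕ) (I : Finset (Fin α.length)) : List ℕ :=
  ((List.finRange α.length).filter (· ∈ I)).map α.get ++
    ((List.finRange α.length).filter (· ∉ I)).map α.get

lemma filter_ne_map_get {β : Type*} : ∀ (l : List β) (m : ℕ),
    ((List.finRange l.length).filter (fun j : Fin l.length => (j : ℕ) ≠ m)).map l.get
      = l.eraseIdx m := by
  intro l
  induction l with
  | nil => simp
  | cons a t ih =>
    intro m
    show ((List.finRange (t.length + 1)).filter
        (fun j : Fin (t.length + 1) => (j : ℕ) ≠ m)).map (a :: t).get = (a :: t).eraseIdx m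
    rw [List.finRange_succ]
    cases m with
    | zero =>
      simp only [List.filter_cons, List.filter_map, Function.comp_def, Fin.val_succ,
        Fin.val_zero, List.eraseIdx]
      norm_num
      have h1 : List.map ((a :: t).get ∘ Fin.succ) (List.finRange t.length)
          = List.map t.get (List.finRange t.length) := List.map_congr_left (fun k _ => rfl)
      rw [h1, List.map_get_finRange]
    | succ m =>
      simp only [List.filter_cons, List.filter_map, Function.comp_def, Fin.val_succ,
        Fin.val_zero, List.eraseIdx]
      norm_num
      rw [← ih m]
      have hf : (List.filter (fun x : Fin t.length => !decide ((x : ℕ) = m))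
          (List.finRange t.length)) = List.filter (fun j : Fin t.length => decide ((j : ℕ) ≠ m))
          (List.finRange t.length) := by simp
      rw [hf]
      apply List.map_congr_left
      intro k _
      rfl

lemma rearr_perm (α : List ℕ) (I : Finset (Fin α.length)) : (rearr α I).Perm α := by
  unfold rearr
  rw [← List.map_append]
  have h2 : (List.finRange α.length).filter (· ∉ I)
      = (List.finRange α.length).filter (fun x => !decide (x ∈ I)) := by
    apply List.filter_congr; intro j _; simp [decide_not]
  rw [h2]
  have := (List.filter_append_perm (fun j : Fin α.length => decide (j ∈ I))
    (List.finRange α.length)).map α.get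
  rwa [List.map_get_finRange] at this

lemma rearr_single (l : List ℕ) (i : Fin l.length) :
    rearr l {i} = l.get i :: l.eraseIdx (i : ℕ) := by
  unfold rearr
  have h1 : (List.finRange l.length).filter (· ∈ ({i} : Finset (Fin l.length))) = [i] := by
    have h : (List.finRange l.length).filter (· ∈ ({i} : Finset (Fin l.length)))
        = (List.finRange l.length).filter (fun j => j = i) := by
      apply List.filter_congr; intro j _; simp
    rw [h, List.filter_eq,
      List.count_eq_one_of_mem (List.nodup_finRange _) (List.mem_finRange i)]
    rfl
  have h2 : (List.finRange l.length).filter (· ∉ ({i} : Finset (Fin l.length))) =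
      (List.finRange l.length).filter (fun j : Fin l.length => (j : ℕ) ≠ (i : ℕ)) := by
    apply List.filter_congr
    intro j _
    simp [Fin.ext_iff]
  rw [h1, h2, filter_ne_map_get]
  rfl

lemma eraseIdx_append_cons (s t : List ℕ) (x : ℕ) :
    (s ++ x :: t).eraseIdx s.length = s ++ t := by
  induction s with
  | nil => rfl
  | cons a s ih => simp [List.eraseIdx, ih]

lemma get_append_cons : ∀ (s t : List ℕ) (x : ℕ) (h : s.length < (s ++ x :: t).length),
    (s ++ x :: t).get ⟨s.length, h⟩ = x := by
  intro s
  induction s with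
  | nil => intros; rfl
  | cons a s ih => intro t x h; exact ih t x (by simpa using h)

/-- Let `λ ⊢ n` and let nonnegative reals `C_α` be given for all
compositions `α ∼ λ`.  If `|S_k(α)| · C_α = Σ_{I ∈ S_k(α)} C_{α(I)}` for all such `α`
and all `k ≤ n`, then all the `C_α` are equal. -/
theorem constants_equal (n : ℕ) (lam : Multiset ℕ) (hsum : lam.sum = n)
    (hpos : ∀ x ∈ lam, 0 < x) (C : List ℕ → ℝ)
    (hC : ∀ α : List ℕ, (α : Multiset ℕ) = lam → 0 ≤ C α)
    (heq : ∀ α : List ℕ, (α : Multiset ℕ) = lam → ∀ k ≤ n,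
      ((Sk α k).card : ℝ) * C α = ∑ I ∈ Sk α k, C (rearr α I)) :
    ∀ α β : List ℕ, (α : Multiset ℕ) = lam → (β : Multiset ℕ) = lam → C α = C β := by
  have h₀ : ((lam.toList : List ℕ) : Multiset ℕ) = lam := Multiset.coe_toList lam
  set P : Finset (List ℕ) := lam.toList.permutations.toFinset with hP
  have hmemP : ∀ γ : List ℕ, γ ∈ P ↔ (γ : Multiset ℕ) = lam := by
    intro γ
    rw [hP, List.mem_toFinset, List.mem_permutations, ← Multiset.coe_eq_coe, h₀]
  obtain ⟨α₀, hα₀P, hmax⟩ := P.exists_max_image C ⟨lam.toList, (hmemP _).2 h₀⟩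
  have hα₀ : (↑α₀ : Multiset ℕ) = lam := (hmemP _).1 hα₀P
  set M := C α₀ with hM
  have hmax' : ∀ γ : List ℕ, (↑γ : Multiset ℕ) = lam → C γ ≤ M :=
    fun γ hγ => hmax γ ((hmemP γ).2 hγ)
  have keyM : ∀ γ : List ℕ, (↑γ : Multiset ℕ) = lam → ∀ i : Fin γ.length,
      ((γ.get i :: γ.eraseIdx (i : ℕ) : List ℕ) : Multiset ℕ) = lam := by
    intro γ hγ i
    rw [← rearr_single, Multiset.coe_eq_coe.2 (rearr_perm γ {i})]
    exact hγ
  have key : ∀ γ : List ℕ, (↑γ : Multiset ℕ) = lam → C γ = M →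
      ∀ i : Fin γ.length, C (γ.get i :: γ.eraseIdx (i : ℕ)) = M := by
    intro γ hγ hCγ i
    have hk : γ.get i ≤ n := by
      have hmem : γ.get i ∈ (↑γ : Multiset ℕ) := by
        simpa using List.get_mem γ i
      rw [hγ] at hmem
      have h := Multiset.single_le_sum (fun x _ => Nat.zero_le x) _ hmem
      rw [hsum] at h
      exact h
    have hI : ({i} : Finset (Fin γ.length)) ∈ Sk γ (γ.get i) := by simp [Sk]
    have hsumEq := heq γ hγ (γ.get i) hk
    have hle : ∀ I ∈ Sk γ (γ.get i), C (rearr γ I) ≤ M := by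
      intro I _
      apply hmax'
      rw [Multiset.coe_eq_coe.2 (rearr_perm γ I)]
      exact hγ
    have hzero : ∑ I ∈ Sk γ (γ.get i), (M - C (rearr γ I)) = 0 := by
      rw [Finset.sum_sub_distrib, Finset.sum_const, ← hsumEq, hCγ, nsmul_eq_mul, sub_self]
    have hz := (Finset.sum_eq_zero_iff_of_nonneg
      (fun I hIm => sub_nonneg.2 (hle I hIm))).1 hzero _ hI
    have hfin : C (rearr γ {i}) = M := by linarith
    rwa [rearr_single] at hfin
  have L : ∀ p s r : List ℕ, ((s ++ r : List ℕ) : Multiset ℕ) = lam → C (s ++ r) = M →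
      (↑r : Multiset ℕ) = (↑p : Multiset ℕ) → C (p ++ s) = M := by
    intro p
    induction p using List.reverseRecOn with
    | nil =>
      intro s r h1 h2 h3
      have hr : r = [] := by
        have := Multiset.coe_eq_coe.1 h3
        simpa using this.eq_nil
      subst hr
      simpa using h2
    | append_singleton q x ih =>
      intro s r h1 h2 h3
      have hx : x ∈ r := by
        have hx' : x ∈ (↑r : Multiset ℕ) := by rw [h3]; simp
        simpa using hx'
      obtain ⟨u, v, rfl⟩ := List.append_of_mem hx
      have hassoc : s ++ (u ++ x :: v) = (s ++ u) ++ x :: v := by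
        simp [List.append_assoc]
      set γ : List ℕ := (s ++ u) ++ x :: v with hγdef
      have hγlam : (↑γ : Multiset ℕ) = lam := by rw [← hassoc]; exact h1
      have hCγ : C γ = M := by rw [← hassoc]; exact h2
      have hlen : (s ++ u).length < γ.length := by simp [hγdef]
      set i : Fin γ.length := ⟨(s ++ u).length, hlen⟩ with hi
      have hget : γ.get i = x := get_append_cons _ _ _ _
      have herase : γ.eraseIdx (i : ℕ) = (s ++ u) ++ v := eraseIdx_append_cons _ _ _
      have hnew := key γ hγlam hCγ i
      have hnewM := keyM γ hγlam i
      rw [hget, herase] at hnew hnewM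
      have hsplit : (x :: ((s ++ u) ++ v) : List ℕ) = (x :: s) ++ (u ++ v) := by
        simp [List.append_assoc]
      rw [hsplit] at hnew hnewM
      have hrq : (↑(u ++ v) : Multiset ℕ) = (↑q : Multiset ℕ) := by
        rw [Multiset.coe_eq_coe]
        have hperm := Multiset.coe_eq_coe.1 h3
        have p1 : (x :: (u ++ v)).Perm (u ++ x :: v) := List.perm_middle.symm
        have p2 : (q ++ [x]).Perm (x :: q) := List.perm_append_singleton x q
        have : (x :: (u ++ v)).Perm (x :: q) := (p1.trans hperm).trans p2
        exact (List.perm_cons x).1 this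
      have := ih (x :: s) (u ++ v) hnewM hnew hrq
      simpa [List.append_assoc] using this
  intro α β hα hβ
  have hcommon : ∀ δ : List ℕ, (↑δ : Multiset ℕ) = lam → C δ = M := by
    intro δ hδ
    have := L δ [] α₀ (by simpa using hα₀) (by simpa using hM.symm) (hα₀.trans hδ.symm)
    simpa using this
  rw [hcommon α hα, hcommon β hβ]
end

section
/- Let Q be a standard Young tableau with n cells and a < u < b ≤ n. Then u is a descent of Q if and only if u-1 is a descent of ∂_a^b Q, where ∂_a^b is the promotion operator applied to the skew subtableau of values in [a,b]. -/
open scoped Classical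

/-- A standard Young tableau with `n` cells: a Young diagram filled bijectively
with the values `1, …, n`, strictly increasing along rows and columns.
Cells outside the diagram carry the value `0`. -/
structure SYT (n : ℕ) where
  shape : YoungDiagram
  val : ℕ × ℕ → ℕ
  zero_of_not_mem : ∀ c, c ∉ shape → val c = 0
  bijOn : Set.BijOn val shape.cells (Finset.Icc 1 n)
  row_lt : ∀ i j : ℕ, (i, j + 1) ∈ shape → val (i, j) < val (i, j + 1)
  col_lt : ∀ i j : ℕ, (i + 1, j) ∈ shape → val (i, j) < val (i + 1, j)

/-- The descent set of a standard Young tableau: `u ∈ Des Q` iff `u+1` lies in a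
strictly lower row than `u` (rows indexed by the first coordinate). -/
noncomputable def SYT.des {n : ℕ} (Q : SYT n) : Finset ℕ :=
  (Finset.Icc 1 (n - 1)).filter fun u =>
    ∃ c ∈ Q.shape, ∃ d ∈ Q.shape, Q.val c = u ∧ Q.val d = u + 1 ∧ c.1 < d.1

/-- `path` is the maximal promotion path of the value `a` in the skew subtableau of `Q`
formed by the values in `[a,b]`: it starts at the box containing `a`, and repeatedly
moves to whichever of the boxes immediately below or to the right holds the smaller
value among those inside the skew region, stopping when no such box exists. -/
def IsPromPath {n : ℕ} (Q : SYT n) (a b : ℕ) (path : List (ℕ × ℕ)) : Prop :=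
  path ≠ [] ∧
  (∀ c ∈ path, c ∈ Q.shape ∧ Q.val c ∈ Finset.Icc a b) ∧
  (∃ c, path.head? = some c ∧ Q.val c = a) ∧
  (path.Chain' fun c d =>
    (d = (c.1 + 1, c.2) ∨ d = (c.1, c.2 + 1)) ∧
    ∀ e, (e = (c.1 + 1, c.2) ∨ e = (c.1, c.2 + 1)) → e ∈ Q.shape →
      Q.val e ∈ Finset.Icc a b → Q.val d ≤ Q.val e) ∧
  (∀ last, path.getLast? = some last →
    ∀ e, (e = (last.1 + 1, last.2) ∨ e = (last.1, last.2 + 1)) → e ∈ Q.shape →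
      Q.val e ∉ Finset.Icc a b)

/-- `IsPromotion a b Q Q'` holds iff `Q' = ∂_a^b Q`: delete the value `a`, slide the
values along the promotion path, place `b+1` in the vacated final box, and decrement
every value of the skew region (now `[a+1, b+1]`) by `1`. -/
def IsPromotion {n : ℕ} (a b : ℕ) (Q Q' : SYT n) : Prop :=
  Q'.shape = Q.shape ∧ ∃ path, IsPromPath Q a b path ∧
    (∀ i (h : i + 1 < path.length),
      Q'.val (path.get ⟨i, Nat.lt_of_succ_lt h⟩) = Q.val (path.get ⟨i + 1, h⟩) - 1) ∧
    (∀ last, path.getLast? = some last → Q'.val last = b) ∧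
    (∀ c ∈ Q.shape, c ∉ path →
      Q'.val c = if Q.val c ∈ Finset.Icc (a + 1) b then Q.val c - 1 else Q.val c)

/-- `IsPromSeq vs Q Q'` holds iff `Q' = ∂_{v_1}^{n-m+1} ∘ ⋯ ∘ ∂_{v_m}^{n} Q` where
`vs = [v_1 < … < v_m]`, i.e. `Q' = ∂_V Q` in the notation of the paper (with `m = n - k`). -/
def IsPromSeq {n : ℕ} (vs : List ℕ) (Q Q' : SYT n) : Prop :=
  ∃ Qs : ℕ → SYT n, Qs 0 = Q ∧ Qs vs.length = Q' ∧
    ∀ t (h : t < vs.length),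
      IsPromotion (vs.get ⟨vs.length - 1 - t, by omega⟩) (n - t) (Qs t) (Qs (t + 1))

/-- Along a row of a Young diagram, values weakly increase with the column. -/
lemma SYT.row_le' {n : ℕ} (Q : SYT n) (r j j' : ℕ) (hjj : j ≤ j') (h : (r, j') ∈ Q.shape) :
    Q.val (r, j) ≤ Q.val (r, j') := by
  obtain ⟨d, rfl⟩ := Nat.exists_eq_add_of_le hjj
  clear hjj
  induction d with
  | zero => simp
  | succ d ih =>
    have h' : (r, j + d) ∈ Q.shape := Q.shape.up_left_mem le_rfl (by omega) h
    have h2 : (r, j + d + 1) ∈ Q.shape := by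
      have : j + (d + 1) = j + d + 1 := by omega
      rwa [this] at h
    have := Q.row_lt r (j + d) h2
    have := ih h'
    have : Q.val (r, j) ≤ Q.val (r, j + d + 1) := by omega
    have heq : j + (d + 1) = j + d + 1 := by omega
    rwa [heq]

set_option maxHeartbeats 1600000 in
/-- For a standard Young tableau `Q` with `n` cells and
`a < u < b ≤ n` (with `1 ≤ a`): `u` is a descent of `Q` iff `u - 1` is a descent of
`∂_a^b Q`. -/
theorem des_promotion (n : ℕ) (Q Q' : SYT n) (a u b : ℕ) (ha : 1 ≤ a)
    (hau : a < u) (hub : u < b) (hbn : b ≤ n) (hprom : IsPromotion a b Q Q') :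
    u ∈ Q.des ↔ u - 1 ∈ Q'.des := by
  classical
  obtain ⟨hshape, path, hpath, hslide, hlastval, hoff⟩ := hprom
  obtain ⟨hne, hmem, ⟨c0, hc0head, hc0val⟩, hchain, hstop⟩ := hpath
  have hLpos : 0 < path.length := List.length_pos_iff_ne_nil.2 hne
  have hget0 : path.get ⟨0, hLpos⟩ = c0 := by
    cases path with
    | nil => simp at hne
    | cons x t => simpa using hc0head
  have hval0 : Q.val (path.get ⟨0, hLpos⟩) = a := by rw [hget0]; exact hc0val
  have hchain' := List.isChain_iff_getElem.1 hchain
  have hmemS : ∀ i (h : i < path.length), path.get ⟨i, h⟩ ∈ Q.shape :=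
    fun i h => (hmem _ (path.get_mem ⟨i, h⟩)).1
  have hmemI : ∀ i (h : i < path.length), Q.val (path.get ⟨i, h⟩) ∈ Finset.Icc a b :=
    fun i h => (hmem _ (path.get_mem ⟨i, h⟩)).2
  have hadj : ∀ i (h : i + 1 < path.length),
      path.get ⟨i+1, h⟩ = ((path.get ⟨i, by omega⟩).1 + 1, (path.get ⟨i, by omega⟩).2) ∨
      path.get ⟨i+1, h⟩ = ((path.get ⟨i, by omega⟩).1, (path.get ⟨i, by omega⟩).2 + 1) :=
    fun i h => (hchain' i (by omega)).1
  have hmin : ∀ i (h : i + 1 < path.length) e,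
      (e = ((path.get ⟨i, by omega⟩).1 + 1, (path.get ⟨i, by omega⟩).2) ∨
       e = ((path.get ⟨i, by omega⟩).1, (path.get ⟨i, by omega⟩).2 + 1)) →
      e ∈ Q.shape → Q.val e ∈ Finset.Icc a b →
      Q.val (path.get ⟨i+1, h⟩) ≤ Q.val e :=
    fun i h => (hchain' i (by omega)).2
  have hinj : ∀ c d : ℕ × ℕ, c ∈ Q.shape → d ∈ Q.shape → Q.val c = Q.val d → c = d := by
    intro c d hc hd h
    exact Q.bijOn.injOn (by simpa using hc) (by simpa using hd) h
  have hstep : ∀ i (h : i + 1 < path.length),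
      Q.val (path.get ⟨i, by omega⟩) < Q.val (path.get ⟨i+1, h⟩) := by
    intro i h
    rcases hadj i h with h1 | h1 <;>
      have hmem' := hmemS (i+1) h <;> simp only [h1] at hmem' ⊢
    · have := Q.col_lt (path.get ⟨i, by omega⟩).1 (path.get ⟨i, by omega⟩).2 hmem'
      simpa using this
    · have := Q.row_lt (path.get ⟨i, by omega⟩).1 (path.get ⟨i, by omega⟩).2 hmem'
      simpa using this
  have hmono : ∀ i j (hj : j < path.length) (_ : i < j),
      Q.val (path.get ⟨i, by omega⟩) < Q.val (path.get ⟨j, hj⟩) := by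
    intro i j
    induction j with
    | zero => omega
    | succ j ih =>
      intro hj hij
      rcases Nat.lt_succ_iff_lt_or_eq.1 hij with h' | rfl
      · exact lt_trans (ih (by omega) h') (hstep j hj)
      · exact hstep i hj
  have hidx : ∀ c ∈ path, Q.val c ≠ a → ∃ (i : ℕ) (h : i + 1 < path.length),
      path.get ⟨i+1, h⟩ = c := by
    intro c hc hne'
    obtain ⟨⟨k, hk⟩, hkc⟩ := List.mem_iff_get.1 hc
    match k, hk, hkc with
    | 0, hk, hkc =>
      exfalso; apply hne'; rw [← hkc]; exact hval0
    | (i+1), hk, hkc => exact ⟨i, hk, hkc⟩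
  -- the cells of u and u+1 in Q
  obtain ⟨cu, hcu_cells, hcu_val⟩ := Q.bijOn.surjOn
    (show (u : ℕ) ∈ ((Finset.Icc 1 n : Finset ℕ) : Set ℕ) by simp [Finset.mem_Icc]; omega)
  obtain ⟨cu1, hcu1_cells, hcu1_val⟩ := Q.bijOn.surjOn
    (show (u + 1 : ℕ) ∈ ((Finset.Icc 1 n : Finset ℕ) : Set ℕ) by simp [Finset.mem_Icc]; omega)
  have hcuS : cu ∈ Q.shape := by simpa using hcu_cells
  have hcu1S : cu1 ∈ Q.shape := by simpa using hcu1_cells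
  have pfst : ∀ (p : ℕ × ℕ) (x y : ℕ), p = (x, y) → p.1 = x ∧ p.2 = y := by
    rintro p x y rfl; exact ⟨rfl, rfl⟩
  -- main claim: locate u-1 and u in Q'
  have main : ∃ cu' du' : ℕ × ℕ, cu' ∈ Q.shape ∧ du' ∈ Q.shape ∧
      Q'.val cu' = u - 1 ∧ Q'.val du' = u ∧ (cu.1 < cu1.1 ↔ cu'.1 < du'.1) := by
    by_cases hcup : cu ∈ path <;> by_cases hcu1p : cu1 ∈ path
    · -- both on the path: they occupy consecutive positions
      obtain ⟨i, hi, hpi⟩ := hidx cu hcup (by rw [hcu_val]; omega)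
      obtain ⟨m, hm, hpm⟩ := hidx cu1 hcu1p (by rw [hcu1_val]; omega)
      have him : i + 1 < m + 1 := by
        rcases lt_trichotomy (i+1) (m+1) with h' | h' | h'
        · exact h'
        · exfalso
          have : cu = cu1 := by
            rw [← hpi, ← hpm]
            congr 1
            exact Fin.ext h'
          simp only [this, hcu1_val] at hcu_val; omega
        · exfalso
          have := hmono (m+1) (i+1) hi h'
          simp only [hpi, hpm, hcu_val, hcu1_val] at this; omega
      have hmeq : m = i + 1 := by
        by_contra h'
        have hlt1 := hmono (i+1) (i+2) (by omega) (by omega)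
        have hlt2 := hmono (i+2) (m+1) hm (by omega)
        simp only [hpi, hcu_val] at hlt1
        simp only [hpm, hcu1_val] at hlt2
        omega
      subst hmeq
      have hiL : i < path.length := by omega
      obtain ⟨ci, hcieq⟩ : ∃ c, path.get ⟨i, hiL⟩ = c := ⟨_, rfl⟩
      have hciS : ci ∈ Q.shape := by rw [← hcieq]; exact hmemS i hiL
      have hciI : Q.val ci ∈ Finset.Icc a b := by rw [← hcieq]; exact hmemI i hiL
      have hv1' : Q'.val ci = u - 1 := by
        have := hslide i hi; simp only [hcieq, hpi, hcu_val] at this; exact this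
      have hv2' : Q'.val cu = u := by
        have := hslide (i+1) hm; simp only [hpi, hpm, hcu1_val] at this
        simpa using this
      refine ⟨ci, cu, hciS, hcuS, hv1', hv2', ?_⟩
      have ha1 := hadj i hi
      have ha2 := hadj (i+1) hm
      have hm1 := hmin i hi
      simp only [hcieq, hpi] at ha1 hm1
      simp only [hpi, hpm] at ha2
      simp only [hcu_val] at hm1
      rcases ha1 with h1 | h1 <;> rcases ha2 with h2 | h2 <;>
        obtain ⟨hr1, hc1⟩ := pfst _ _ _ h1 <;> obtain ⟨hr2, hc2⟩ := pfst _ _ _ h2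
      · -- down, down
        omega
      · -- down then right : contradiction
        exfalso
        have hcu1pair : (ci.1 + 1, ci.2 + 1) = cu1 := by
          apply Prod.ext <;> simp <;> omega
        have h3' : (ci.1 + 1, ci.2 + 1) ∈ Q.shape := by rw [hcu1pair]; exact hcu1S
        have heS : (ci.1, ci.2 + 1) ∈ Q.shape :=
          Q.shape.up_left_mem (Nat.le_succ ci.1) le_rfl h3'
        have hv1 : Q.val ci < Q.val (ci.1, ci.2 + 1) := by
          have := Q.row_lt ci.1 ci.2 heS
          simpa using this
        have hv2 : Q.val (ci.1, ci.2 + 1) < u + 1 := by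
          have := Q.col_lt ci.1 (ci.2 + 1) h3'
          have h4 : Q.val (ci.1 + 1, ci.2 + 1) = u + 1 := by rw [hcu1pair, hcu1_val]
          omega
        have hv3 : Q.val (ci.1, ci.2 + 1) ≠ u := by
          intro hval
          have heq : (ci.1, ci.2 + 1) = cu := hinj _ _ heS hcuS (by rw [hval, hcu_val])
          obtain ⟨e1, e2⟩ := pfst _ _ _ heq.symm
          omega
        have hreg : Q.val (ci.1, ci.2 + 1) ∈ Finset.Icc a b := by
          rw [Finset.mem_Icc] at hciI ⊢
          omega
        have := hm1 (ci.1, ci.2 + 1) (Or.inr rfl) heS hreg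
        omega
      · -- right then down : contradiction
        exfalso
        have hcu1pair : (ci.1 + 1, ci.2 + 1) = cu1 := by
          apply Prod.ext <;> simp <;> omega
        have h3' : (ci.1 + 1, ci.2 + 1) ∈ Q.shape := by rw [hcu1pair]; exact hcu1S
        have heS : (ci.1 + 1, ci.2) ∈ Q.shape :=
          Q.shape.up_left_mem le_rfl (Nat.le_succ ci.2) h3'
        have hv1 : Q.val ci < Q.val (ci.1 + 1, ci.2) := by
          have := Q.col_lt ci.1 ci.2 heS
          simpa using this
        have hv2 : Q.val (ci.1 + 1, ci.2) < u + 1 := by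
          have := Q.row_lt (ci.1 + 1) ci.2 h3'
          have h4 : Q.val (ci.1 + 1, ci.2 + 1) = u + 1 := by rw [hcu1pair, hcu1_val]
          omega
        have hv3 : Q.val (ci.1 + 1, ci.2) ≠ u := by
          intro hval
          have heq : (ci.1 + 1, ci.2) = cu := hinj _ _ heS hcuS (by rw [hval, hcu_val])
          obtain ⟨e1, e2⟩ := pfst _ _ _ heq.symm
          omega
        have hreg : Q.val (ci.1 + 1, ci.2) ∈ Finset.Icc a b := by
          rw [Finset.mem_Icc] at hciI ⊢
          omega
        have := hm1 (ci.1 + 1, ci.2) (Or.inl rfl) heS hreg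
        omega
      · -- right, right
        omega
    · -- u on the path, u+1 off the path
      obtain ⟨i, hi, hpi⟩ := hidx cu hcup (by rw [hcu_val]; omega)
      have hiL : i < path.length := by omega
      obtain ⟨ci, hcieq⟩ : ∃ c, path.get ⟨i, hiL⟩ = c := ⟨_, rfl⟩
      have hciS : ci ∈ Q.shape := by rw [← hcieq]; exact hmemS i hiL
      have hv1' : Q'.val ci = u - 1 := by
        have := hslide i hi; simp only [hcieq, hpi, hcu_val] at this; exact this
      refine ⟨ci, cu1, hciS, hcu1S, hv1', ?_, ?_⟩
      · rw [hoff cu1 hcu1S hcu1p, hcu1_val, if_pos (by rw [Finset.mem_Icc]; omega)]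
        omega
      · have ha1 := hadj i hi
        simp only [hcieq, hpi] at ha1
        rcases ha1 with h1 | h1 <;> obtain ⟨hr1, hc1⟩ := pfst _ _ _ h1
        · -- down step
          have hner : cu1.1 ≠ cu.1 := by
            intro heq
            have hclt : cu.2 < cu1.2 := by
              by_contra h'
              have h2 : (cu.1, cu.2) ∈ Q.shape := by simpa using hcuS
              have hle := Q.row_le' cu.1 cu1.2 cu.2 (by omega) h2
              have e1 : (cu.1, cu1.2) = cu1 := by
                apply Prod.ext <;> simp <;> omega
              simp only [e1] at hle
              simp only [Prod.mk.eta] at hle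
              simp only [hcu_val, hcu1_val] at hle
              omega
            have hcu1pairS : (cu.1, cu1.2) ∈ Q.shape := by
              have e1 : (cu.1, cu1.2) = cu1 := by apply Prod.ext <;> simp <;> omega
              rw [e1]; exact hcu1S
            have heS : (cu.1, cu.2 + 1) ∈ Q.shape :=
              Q.shape.up_left_mem le_rfl (by omega) hcu1pairS
            have hv1 : u < Q.val (cu.1, cu.2 + 1) := by
              have h5 := Q.row_lt cu.1 cu.2 heS
              simp only [Prod.mk.eta] at h5
              rwa [hcu_val] at h5
            have hv2 : Q.val (cu.1, cu.2 + 1) ≤ u + 1 := by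
              have h5 := Q.row_le' cu.1 (cu.2 + 1) cu1.2 (by omega) hcu1pairS
              have e1 : (cu.1, cu1.2) = cu1 := by apply Prod.ext <;> simp <;> omega
              simp only [e1, hcu1_val] at h5
              exact h5
            have hval : Q.val (cu.1, cu.2 + 1) = u + 1 := by omega
            have hecu1 : (cu.1, cu.2 + 1) = cu1 :=
              hinj _ _ heS hcu1S (by rw [hval, hcu1_val])
            by_cases hL2 : i + 2 < path.length
            · have h6 := hmin (i+1) hL2 cu1 (by rw [hpi]; exact Or.inr hecu1.symm) hcu1S
                (by rw [Finset.mem_Icc, hcu1_val]; omega)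
              simp only [hcu1_val] at h6
              have hst := hstep (i+1) hL2
              simp only [hpi, hcu_val] at hst
              have hval2 : Q.val (path.get ⟨i+1+1, hL2⟩) = u + 1 := by omega
              have h7 : path.get ⟨i+1+1, hL2⟩ = cu1 :=
                hinj _ _ (hmemS _ _) hcu1S (by rw [hval2, hcu1_val])
              exact hcu1p (h7 ▸ path.get_mem ⟨i+1+1, hL2⟩)
            · have hlasteq : path.getLast? = some cu := by
                have hlen : path.length - 1 = i + 1 := by omega
                rw [List.getLast?_eq_getElem?, hlen, List.getElem?_eq_getElem hi]; exact congrArg some hpi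
              exact hstop cu hlasteq cu1 (Or.inr hecu1.symm) hcu1S
                (by rw [Finset.mem_Icc, hcu1_val]; omega)
          omega
        · -- right step: rows agree
          omega
    · -- u off the path, u+1 on the path
      obtain ⟨i, hi, hpi⟩ := hidx cu1 hcu1p (by rw [hcu1_val]; omega)
      have hiL : i < path.length := by omega
      obtain ⟨ci, hcieq⟩ : ∃ c, path.get ⟨i, hiL⟩ = c := ⟨_, rfl⟩
      have hciS : ci ∈ Q.shape := by rw [← hcieq]; exact hmemS i hiL
      have hciI : Q.val ci ∈ Finset.Icc a b := by rw [← hcieq]; exact hmemI i hiL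
      have hv2' : Q'.val ci = u := by
        have := hslide i hi; simp only [hcieq, hpi, hcu1_val] at this
        simpa using this
      refine ⟨cu, ci, hcuS, hciS, ?_, hv2', ?_⟩
      · rw [hoff cu hcuS hcup, hcu_val, if_pos (by rw [Finset.mem_Icc]; omega)]
      · have ha1 := hadj i hi
        have hm1 := hmin i hi
        simp only [hcieq, hpi] at ha1 hm1
        simp only [hcu1_val] at hm1
        rcases ha1 with h1 | h1 <;> obtain ⟨hr1, hc1⟩ := pfst _ _ _ h1
        · -- down step
          have hner : cu.1 ≠ ci.1 := by
            intro heq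
            have hvi_lt : Q.val ci < u + 1 := by
              have := hstep i hi
              simp only [hcieq, hpi, hcu1_val] at this
              exact this
            have hvi_ne : Q.val ci ≠ u := by
              intro hval
              have h8 : ci = cu := hinj _ _ hciS hcuS (by rw [hval, hcu_val])
              apply hcup
              rw [← h8, ← hcieq]
              exact path.get_mem ⟨i, hiL⟩
            have hvi_a : a ≤ Q.val ci := by
              rw [Finset.mem_Icc] at hciI
              omega
            have hclt : ci.2 < cu.2 := by
              by_contra h'
              have h2 : (ci.1, ci.2) ∈ Q.shape := by simpa using hciS
              have hle := Q.row_le' ci.1 cu.2 ci.2 (by omega) h2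
              have e1 : (ci.1, cu.2) = cu := by apply Prod.ext <;> simp <;> omega
              simp only [e1, Prod.mk.eta] at hle
              simp only [hcu_val] at hle
              omega
            have hcupairS : (ci.1, cu.2) ∈ Q.shape := by
              have e1 : (ci.1, cu.2) = cu := by apply Prod.ext <;> simp <;> omega
              rw [e1]; exact hcuS
            have heS : (ci.1, ci.2 + 1) ∈ Q.shape :=
              Q.shape.up_left_mem le_rfl (by omega) hcupairS
            have hv1 : Q.val ci < Q.val (ci.1, ci.2 + 1) := by
              have := Q.row_lt ci.1 ci.2 heS
              simpa using this
            have hv2 : Q.val (ci.1, ci.2 + 1) ≤ u := by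
              have h5 := Q.row_le' ci.1 (ci.2 + 1) cu.2 (by omega) hcupairS
              have e1 : (ci.1, cu.2) = cu := by apply Prod.ext <;> simp <;> omega
              simp only [e1, hcu_val] at h5
              exact h5
            have hreg : Q.val (ci.1, ci.2 + 1) ∈ Finset.Icc a b := by
              rw [Finset.mem_Icc]; omega
            have := hm1 (ci.1, ci.2 + 1) (Or.inr rfl) heS hreg
            omega
          omega
        · -- right step
          omega
    · -- neither on the path
      refine ⟨cu, cu1, hcuS, hcu1S, ?_, ?_, Iff.rfl⟩
      · rw [hoff cu hcuS hcup, hcu_val, if_pos (by rw [Finset.mem_Icc]; omega)]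
      · rw [hoff cu1 hcu1S hcu1p, hcu1_val, if_pos (by rw [Finset.mem_Icc]; omega)]
        omega
  -- assemble the equivalence
  obtain ⟨cu', du', hcu'S, hdu'S, hcu'v, hdu'v, hiff⟩ := main
  have hinj' : ∀ c d : ℕ × ℕ, c ∈ Q'.shape → d ∈ Q'.shape → Q'.val c = Q'.val d → c = d := by
    intro c d hc hd h
    exact Q'.bijOn.injOn (by simpa using hc) (by simpa using hd) h
  constructor
  · intro hdes
    simp only [SYT.des, Finset.mem_filter] at hdes ⊢
    obtain ⟨-, c, hcS, d, hdS, hcv, hdv, hrow⟩ := hdes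
    have hc : c = cu := hinj _ _ hcS hcuS (by rw [hcv, hcu_val])
    have hd : d = cu1 := hinj _ _ hdS hcu1S (by rw [hdv, hcu1_val])
    subst hc; subst hd
    refine ⟨by rw [Finset.mem_Icc]; omega, cu', by rwa [hshape], du', by rwa [hshape],
      hcu'v, by rw [hdu'v]; omega, hiff.1 hrow⟩
  · intro hdes
    simp only [SYT.des, Finset.mem_filter] at hdes ⊢
    obtain ⟨-, c, hcS, d, hdS, hcv, hdv, hrow⟩ := hdes
    have hc : c = cu' := hinj' _ _ hcS (by rwa [hshape]) (by rw [hcv, hcu'v])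
    have hd : d = du' := hinj' _ _ hdS (by rwa [hshape]) (by rw [hdv, hdu'v]; omega)
    subst hc; subst hd
    exact ⟨by rw [Finset.mem_Icc]; omega, cu, hcuS, cu1, hcu1S, hcu_val, hcu1_val,
      hiff.2 hrow⟩
end

section
/- Let Q be a standard Young tableau with n cells, and u ≤ k+1 < n. Then u ∈ Des(Q) if and only if k+1 ∈ Des(∂_u^{k+1} ∘ ∂_{u+1}^{k+2} Q). -/
open scoped Classical

namespace DDAux

variable {n : ℕ}

lemma mem_of_le {T : SYT n} {c d : ℕ × ℕ} (hd : d ∈ T.shape) (h1 : c.1 ≤ d.1) (h2 : c.2 ≤ d.2) :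
    c ∈ T.shape := by
  have := T.shape.up_left_mem h1 h2 (by simpa using hd)
  simpa using this

lemma val_le_right (T : SYT n) (i j : ℕ) : ∀ d : ℕ, (i, j + d) ∈ T.shape →
    T.val (i, j) ≤ T.val (i, j + d) := by
  intro d
  induction d with
  | zero => intro _; exact le_refl _
  | succ d ih =>
    intro h
    have h1 : (i, j + d + 1) ∈ T.shape := by rwa [show j + (d+1) = j + d + 1 by omega] at h
    have h2 : (i, j + d) ∈ T.shape := mem_of_le h1 (le_refl _) (by simp)
    have := T.row_lt i (j + d) h1
    have := ih h2
    rw [show j + (d+1) = j + d + 1 by omega]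
    omega

lemma val_le_down (T : SYT n) (i j : ℕ) : ∀ d : ℕ, (i + d, j) ∈ T.shape →
    T.val (i, j) ≤ T.val (i + d, j) := by
  intro d
  induction d with
  | zero => intro _; exact le_refl _
  | succ d ih =>
    intro h
    have h1 : (i + d + 1, j) ∈ T.shape := by rwa [show i + (d+1) = i + d + 1 by omega] at h
    have h2 : (i + d, j) ∈ T.shape := mem_of_le h1 (by simp) (le_refl _)
    have := T.col_lt (i + d) j h1
    have := ih h2
    rw [show i + (d+1) = i + d + 1 by omega]
    omega

lemma val_le (T : SYT n) {c d : ℕ × ℕ} (hd : d ∈ T.shape) (h1 : c.1 ≤ d.1) (h2 : c.2 ≤ d.2) :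
    T.val c ≤ T.val d := by
  obtain ⟨a, b⟩ := c; obtain ⟨a', b'⟩ := d
  simp only at h1 h2
  have hm : (a, b') ∈ T.shape := mem_of_le hd h1 (le_refl _)
  have e1 : T.val (a, b) ≤ T.val (a, b') := by
    have := val_le_right T a b (b' - b) (by rwa [show b + (b' - b) = b' by omega])
    rwa [show b + (b' - b) = b' by omega] at this
  have e2 : T.val (a, b') ≤ T.val (a', b') := by
    have := val_le_down T a b' (a' - a) (by rwa [show a + (a' - a) = a' by omega])
    rwa [show a + (a' - a) = a' by omega] at this
  omega

lemma val_lt (T : SYT n) {c d : ℕ × ℕ} (hd : d ∈ T.shape) (h1 : c.1 ≤ d.1) (h2 : c.2 ≤ d.2)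
    (hne : c ≠ d) : T.val c < T.val d := by
  obtain ⟨a, b⟩ := c; obtain ⟨a', b'⟩ := d
  simp only at h1 h2
  rcases Nat.lt_or_ge a a' with h | h
  · have h3 : (a' - 1, b') ∈ T.shape := mem_of_le hd (by omega) (le_refl _)
    have e1 : T.val (a, b) ≤ T.val (a' - 1, b') := val_le T h3 (by omega) (by omega)
    have e2 : T.val (a' - 1, b') < T.val (a', b') := by
      have := T.col_lt (a' - 1) b' (by rwa [show a' - 1 + 1 = a' by omega])
      rwa [show a' - 1 + 1 = a' by omega] at this
    omega
  · have ha : a = a' := by omega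
    subst ha
    have hb : b < b' := by
      rcases Nat.lt_or_ge b b' with h' | h'
      · exact h'
      · exact absurd (by omega : b = b') (fun e => hne (by rw [e]))
    have h3 : (a, b' - 1) ∈ T.shape := mem_of_le hd (le_refl _) (by omega)
    have e1 : T.val (a, b) ≤ T.val (a, b' - 1) := val_le T h3 (le_refl _) (by omega)
    have e2 : T.val (a, b' - 1) < T.val (a, b') := by
      have := T.row_lt a (b' - 1) (by rwa [show b' - 1 + 1 = b' by omega])
      rwa [show b' - 1 + 1 = b' by omega] at this
    omega

lemma val_inj (T : SYT n) {c d : ℕ × ℕ} (hc : c ∈ T.shape) (hd : d ∈ T.shape)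
    (h : T.val c = T.val d) : c = d :=
  T.bijOn.injOn (by simpa using hc) (by simpa using hd) h

lemma val_mem_Icc (T : SYT n) {c : ℕ × ℕ} (hc : c ∈ T.shape) : T.val c ∈ Finset.Icc 1 n := by
  have := T.bijOn.mapsTo (show c ∈ (T.shape.cells : Set (ℕ × ℕ)) by simpa using hc)
  simpa using this

/-- Step relation for lattice paths. -/
def PStep (f : ℕ → ℕ × ℕ) (L : ℕ) : Prop :=
  ∀ i, i + 1 < L → f (i+1) = ((f i).1 + 1, (f i).2) ∨ f (i+1) = ((f i).1, (f i).2 + 1)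

lemma pstep_swap {f : ℕ → ℕ × ℕ} {L : ℕ} (h : PStep f L) : PStep (fun i => (f i).swap) L := by
  intro i hi
  rcases h i hi with h' | h'
  · right; simp [Prod.swap, h']
  · left; simp [Prod.swap, h']

lemma path_mono {f : ℕ → ℕ × ℕ} {L : ℕ} (hs : PStep f L) :
    ∀ i j, i ≤ j → j < L →
      (f i).1 ≤ (f j).1 ∧ (f i).2 ≤ (f j).2 ∧ (f j).1 + (f j).2 = (f i).1 + (f i).2 + (j - i) := by
  intro i j hij hj
  obtain ⟨d, rfl⟩ : ∃ d, j = i + d := ⟨j - i, by omega⟩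
  clear hij
  induction d with
  | zero => simp
  | succ d ih =>
    obtain ⟨h1, h2, h3⟩ := ih (by omega)
    have hst := hs (i + d) (by omega)
    rw [show i + (d+1) = (i + d) + 1 by omega]
    rcases hst with h' | h' <;> rw [h'] <;> simp <;> omega

lemma path_cover_row {f : ℕ → ℕ × ℕ} {L : ℕ} (hs : PStep f L) :
    ∀ i j r, i ≤ j → j < L → (f i).1 ≤ r → r ≤ (f j).1 →
      ∃ t, i ≤ t ∧ t ≤ j ∧ (f t).1 = r := by
  intro i j r hij hj h1 h2
  obtain ⟨d, rfl⟩ : ∃ d, j = i + d := ⟨j - i, by omega⟩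
  clear hij
  induction d with
  | zero => exact ⟨i, le_refl _, le_refl _, by simp only [Nat.add_zero] at h2; omega⟩
  | succ d ih =>
    rcases Nat.lt_or_ge ((f (i + d)).1) r with h' | h'
    · -- r > row at i+d, and r ≤ row at i+d+1 ≤ row(i+d)+1
      have hst := hs (i + d) (by omega)
      have : (f (i + (d+1))).1 ≤ (f (i+d)).1 + 1 := by
        rw [show i + (d+1) = (i + d) + 1 by omega]
        rcases hst with h'' | h'' <;> rw [h''] <;> simp
      exact ⟨i + (d+1), by omega, le_refl _, by omega⟩
    · obtain ⟨t, ht1, ht2, ht3⟩ := ih (by omega) h'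
      exact ⟨t, ht1, by omega, ht3⟩

lemma path_cover_col {f : ℕ → ℕ × ℕ} {L : ℕ} (hs : PStep f L) :
    ∀ i j r, i ≤ j → j < L → (f i).2 ≤ r → r ≤ (f j).2 →
      ∃ t, i ≤ t ∧ t ≤ j ∧ (f t).2 = r := by
  intro i j r hij hj h1 h2
  obtain ⟨t, ht1, ht2, ht3⟩ := path_cover_row (pstep_swap hs) i j r hij hj h1 h2
  exact ⟨t, ht1, ht2, ht3⟩

end DDAux

/-- For a standard Young tableau `Q` with `n` cells and
`u ≤ k+1 < n` (with `1 ≤ u`): `u ∈ Des(Q)` iff `k+1 ∈ Des(∂_u^{k+1} ∘ ∂_{u+1}^{k+2} Q)`. -/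
theorem des_double_promotion (n : ℕ) (Q Q1 Q2 : SYT n) (u k : ℕ) (hu : 1 ≤ u)
    (huk : u ≤ k + 1) (hkn : k + 1 < n)
    (h1 : IsPromotion (u + 1) (k + 2) Q Q1) (h2 : IsPromotion u (k + 1) Q1 Q2) :
    u ∈ Q.des ↔ k + 1 ∈ Q2.des := by
  classical
  obtain ⟨hsh1, p, hpp, hv1, hvl1, hoff1⟩ := h1
  obtain ⟨hsh2, q, hqq, hv2, hvl2, hoff2⟩ := h2
  obtain ⟨hpne, hpmem, hphead, hpchain, hpstop⟩ := hpp
  obtain ⟨hqne, hqmem, hqhead, hqchain, hqstop⟩ := hqq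
  set pg : ℕ → ℕ × ℕ := fun i => p.getD i (0,0) with hpg
  set qg : ℕ → ℕ × ℕ := fun i => q.getD i (0,0) with hqg
  have hplen : 0 < p.length := List.length_pos_iff_ne_nil.mpr hpne
  have hqlen : 0 < q.length := List.length_pos_iff_ne_nil.mpr hqne
  have hpget : ∀ (i : ℕ) (h : i < p.length), p.get ⟨i, h⟩ = pg i := fun i h => by
    rw [hpg]; simp only; rw [List.getD_eq_getElem p (0,0) h]; rfl
  have hqget : ∀ (i : ℕ) (h : i < q.length), q.get ⟨i, h⟩ = qg i := fun i h => by
    rw [hqg]; simp only; rw [List.getD_eq_getElem q (0,0) h]; rfl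
  have hpel : ∀ i, i < p.length → pg i ∈ p := fun i h => by
    rw [hpg]; simp only; rw [List.getD_eq_getElem p (0,0) h]; exact List.getElem_mem ..
  have hqel : ∀ i, i < q.length → qg i ∈ q := fun i h => by
    rw [hqg]; simp only; rw [List.getD_eq_getElem q (0,0) h]; exact List.getElem_mem ..
  have hpidx : ∀ c ∈ p, ∃ i, i < p.length ∧ pg i = c := fun c hc => by
    obtain ⟨i, hi, rfl⟩ := List.mem_iff_getElem.mp hc
    exact ⟨i, hi, by rw [hpg]; simp only; rw [List.getD_eq_getElem p (0,0) hi]⟩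
  have hqidx : ∀ c ∈ q, ∃ i, i < q.length ∧ qg i = c := fun c hc => by
    obtain ⟨i, hi, rfl⟩ := List.mem_iff_getElem.mp hc
    exact ⟨i, hi, by rw [hqg]; simp only; rw [List.getD_eq_getElem q (0,0) hi]⟩
  -- basic facts about p in Q
  have hpsh : ∀ i, i < p.length → pg i ∈ Q.shape := fun i h => (hpmem _ (hpel i h)).1
  have hpval : ∀ i, i < p.length → u + 1 ≤ Q.val (pg i) ∧ Q.val (pg i) ≤ k + 2 := fun i h => by
    have := (hpmem _ (hpel i h)).2; rwa [Finset.mem_Icc] at this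
  have hqsh1 : ∀ j, j < q.length → qg j ∈ Q1.shape := fun j h => (hqmem _ (hqel j h)).1
  have hqsh : ∀ j, j < q.length → qg j ∈ Q.shape := fun j h => by
    have := hqsh1 j h; rwa [hsh1] at this
  have hqval : ∀ j, j < q.length → u ≤ Q1.val (qg j) ∧ Q1.val (qg j) ≤ k + 1 := fun j h => by
    have := (hqmem _ (hqel j h)).2; rwa [Finset.mem_Icc] at this
  -- chain facts
  have hpchain' := List.isChain_iff_getElem.mp hpchain
  have hqchain' := List.isChain_iff_getElem.mp hqchain
  have hpget' : ∀ (i : ℕ) (h : i < p.length), p[i] = pg i := hpget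
  have hqget' : ∀ (i : ℕ) (h : i < q.length), q[i] = qg i := hqget
  have hpstep : DDAux.PStep pg p.length := by
    intro i hi
    have := (hpchain' i (by omega)).1
    rw [hpget' i (by omega), hpget' (i+1) (by omega)] at this
    tauto
  have hqstep : DDAux.PStep qg q.length := by
    intro i hi
    have := (hqchain' i (by omega)).1
    rw [hqget' i (by omega), hqget' (i+1) (by omega)] at this
    tauto
  have hpmin : ∀ i, i + 1 < p.length → ∀ e : ℕ × ℕ,
      (e = ((pg i).1 + 1, (pg i).2) ∨ e = ((pg i).1, (pg i).2 + 1)) → e ∈ Q.shape →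
      Q.val e ∈ Finset.Icc (u+1) (k+2) → Q.val (pg (i+1)) ≤ Q.val e := by
    intro i hi e he hsh hval
    have := (hpchain' i (by omega)).2 e
    rw [hpget' i (by omega), hpget' (i+1) (by omega)] at this
    exact this he hsh hval
  have hqmin : ∀ j, j + 1 < q.length → ∀ e : ℕ × ℕ,
      (e = ((qg j).1 + 1, (qg j).2) ∨ e = ((qg j).1, (qg j).2 + 1)) → e ∈ Q.shape →
      Q1.val e ∈ Finset.Icc u (k+1) → Q1.val (qg (j+1)) ≤ Q1.val e := by
    intro j hj e he hsh hval
    have h2 := (hqchain' j (by omega)).2 e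
    rw [hqget' j (by omega), hqget' (j+1) (by omega)] at h2
    exact h2 he (by rw [hsh1]; exact hsh) hval
  -- heads
  have hphead' : Q.val (pg 0) = u + 1 := by
    obtain ⟨c, hc1, hc2⟩ := hphead
    have : p.head? = some (pg 0) := by
      cases hp : p with
      | nil => exact absurd hp hpne
      | cons a t =>
        rw [hpg]; simp [hp]
    rw [this] at hc1
    injection hc1 with h'
    rw [h']; exact hc2
  have hqhead' : Q1.val (qg 0) = u := by
    obtain ⟨c, hc1, hc2⟩ := hqhead
    have : q.head? = some (qg 0) := by
      cases hp : q with
      | nil => exact absurd hp hqne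
      | cons a t =>
        rw [hqg]; simp [hp]
    rw [this] at hc1
    injection hc1 with h'
    rw [h']; exact hc2
  -- getLast bridges
  have hplast : p.getLast? = some (pg (p.length - 1)) := by
    rw [List.getLast?_eq_getLast hpne, List.getLast_eq_getElem]
    rw [hpg]; simp only; rw [List.getD_eq_getElem p (0,0) (by omega)]
  have hqlast : q.getLast? = some (qg (q.length - 1)) := by
    rw [List.getLast?_eq_getLast hqne, List.getLast_eq_getElem]
    rw [hqg]; simp only; rw [List.getD_eq_getElem q (0,0) (by omega)]
  -- promotion value facts
  have hv1' : ∀ i, i + 1 < p.length → Q1.val (pg i) = Q.val (pg (i+1)) - 1 := by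
    intro i hi
    have := hv1 i hi
    rwa [hpget i (by omega), hpget (i+1) hi] at this
  have hvl1' : Q1.val (pg (p.length - 1)) = k + 2 := hvl1 _ hplast
  have hoff1' : ∀ c, c ∈ Q.shape → c ∉ p →
      Q1.val c = if Q.val c ∈ Finset.Icc (u + 1 + 1) (k + 2) then Q.val c - 1 else Q.val c :=
    fun c h1 h2 => hoff1 c h1 h2
  have hv2' : ∀ j, j + 1 < q.length → Q2.val (qg j) = Q1.val (qg (j+1)) - 1 := by
    intro j hj
    have := hv2 j hj
    rwa [hqget j (by omega), hqget (j+1) hj] at this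
  have hvl2' : Q2.val (qg (q.length - 1)) = k + 1 := hvl2 _ hqlast
  have hoff2' : ∀ c, c ∈ Q.shape → c ∉ q →
      Q2.val c = if Q1.val c ∈ Finset.Icc (u + 1) (k + 1) then Q1.val c - 1 else Q1.val c :=
    fun c h1 h2 => hoff2 c (by rw [hsh1]; exact h1) h2
  have hqstop' : ∀ e : ℕ × ℕ,
      (e = ((qg (q.length - 1)).1 + 1, (qg (q.length - 1)).2) ∨
       e = ((qg (q.length - 1)).1, (qg (q.length - 1)).2 + 1)) → e ∈ Q.shape →
      Q1.val e ∉ Finset.Icc u (k+1) := by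
    intro e he hsh
    exact hqstop _ hqlast e he (by rw [hsh1]; exact hsh)
  -- monotonicity
  have hpm := DDAux.path_mono hpstep
  have hqm := DDAux.path_mono hqstep
  have hpinj : ∀ i j, i < j → j < p.length → pg i ≠ pg j := by
    intro i j hij hj hne
    have := (hpm i j (by omega) hj).2.2
    rw [hne] at this; omega
  -- values along p strictly increase
  have hpvmono : ∀ i j, i < j → j < p.length → Q.val (pg i) < Q.val (pg j) := by
    intro i j hij hj
    obtain ⟨h1, h2, h3⟩ := hpm i j (by omega) hj
    exact DDAux.val_lt Q (hpsh j hj) h1 h2 (hpinj i j hij hj)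
  -- Q1 values along q strictly increase (consecutive)
  have hqvmono : ∀ j, j + 1 < q.length → Q1.val (qg j) < Q1.val (qg (j+1)) := by
    intro j hj
    obtain ⟨h1, h2, h3⟩ := hqm j (j+1) (by omega) hj
    refine DDAux.val_lt Q1 (hqsh1 (j+1) hj) h1 h2 ?_
    intro hne
    rw [hne] at h3; omega
  -- Q1 values on p are > u
  have hq1p : ∀ i, i < p.length → u + 1 ≤ Q1.val (pg i) := by
    intro i hi
    rcases Nat.lt_or_ge (i+1) p.length with h | h
    · have := hv1' i h
      have h2 := hpvmono i (i+1) (by omega) h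
      have h3 := (hpval i hi).1
      omega
    · have : i = p.length - 1 := by omega
      rw [this, hvl1']; omega
  -- q never meets the last box of p
  have hqnpm : ∀ j, j < q.length → qg j ≠ pg (p.length - 1) := by
    intro j hj hne
    have := (hqval j hj).2
    rw [hne, hvl1'] at this; omega
  -- the box of u
  have hq0np : qg 0 ∉ p := by
    intro hc
    obtain ⟨i, hi, hieq⟩ := hpidx _ hc
    have := hq1p i hi
    rw [hieq, hqhead'] at this; omega
  have hq0Q : Q.val (qg 0) = u := by
    have h0 := hoff1' (qg 0) (hqsh 0 hqlen) hq0np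
    by_cases hcc : Q.val (qg 0) ∈ Finset.Icc (u + 1 + 1) (k + 2)
    · rw [if_pos hcc] at h0
      rw [Finset.mem_Icc] at hcc
      rw [hqhead'] at h0
      omega
    · rw [if_neg hcc] at h0; rw [← h0]; exact hqhead'
  -- ** Exchange lemma, case A: if q steps DOWN onto p, then p continues DOWN **
  have lemStar : ∀ j t, j + 1 < q.length → t + 1 < p.length → qg (j+1) = pg t →
      qg (j+1) = ((qg j).1 + 1, (qg j).2) →
      pg (t+1) = ((pg t).1 + 1, (pg t).2) := by
    intro j t hj ht hqt hdown
    rcases hpstep t ht with h | h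
    · exact h
    exfalso
    have hzco : pg (t+1) = ((qg j).1 + 1, (qg j).2 + 1) := by
      rw [h, ← hqt, hdown]
    have hzsh : pg (t+1) ∈ Q.shape := hpsh (t+1) ht
    have hwsh : ((qg j).1, (qg j).2 + 1) ∈ Q.shape := by
      refine DDAux.mem_of_le hzsh ?_ ?_ <;> rw [hzco] <;> exact Nat.le_succ _
    have hwne : ((qg j).1, (qg j).2 + 1) ≠ pg (t+1) := by
      rw [hzco]
      intro hcon
      have := congrArg Prod.fst hcon
      change (qg j).1 = (qg j).1 + 1 at this
      omega
    have hwlt : Q.val ((qg j).1, (qg j).2 + 1) < Q.val (pg (t+1)) := by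
      refine DDAux.val_lt Q hzsh ?_ ?_ hwne <;> rw [hzco] <;> exact Nat.le_succ _
    have hyco : pg t = ((qg j).1 + 1, (qg j).2) := by rw [← hqt, hdown]
    have hwnp : ((qg j).1, (qg j).2 + 1) ∉ p := by
      intro hc
      obtain ⟨t', ht', hteq⟩ := hpidx _ hc
      rcases Nat.lt_or_ge t' t with hlt | hge
      · have h2 := (hpm t' t (le_of_lt hlt) (by omega)).2.1
        rw [hteq, hyco] at h2
        change (qg j).2 + 1 ≤ (qg j).2 at h2
        omega
      · rcases Nat.eq_or_lt_of_le hge with heq | hlt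
        · have h2 : ((qg j).1, (qg j).2 + 1) = ((qg j).1 + 1, (qg j).2) := by
            rw [← hteq, ← heq, hyco]
          have h3 := congrArg Prod.fst h2
          change (qg j).1 = (qg j).1 + 1 at h3
          omega
        · have h2 := (hpm t t' (le_of_lt hlt) ht').1
          rw [hteq, hyco] at h2
          change (qg j).1 + 1 ≤ (qg j).1 at h2
          omega
    have hvz1 : Q.val (pg (t+1)) ≤ k + 2 := (hpval (t+1) ht).2
    have hvz2 : u + 2 ≤ Q.val (pg (t+1)) := by
      have h2 := hpvmono t (t+1) (by omega) ht
      have := (hpval t (by omega)).1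
      omega
    have hyv : Q1.val (qg (j+1)) = Q.val (pg (t+1)) - 1 := by rw [hqt]; exact hv1' t ht
    rcases Nat.lt_or_ge (Q.val ((qg j).1, (qg j).2 + 1)) (u+1) with hsm | hbg
    · -- value ≤ u : impossible since it is right of x
      have h1 := hoff1' _ hwsh hwnp
      rw [if_neg (by rw [Finset.mem_Icc]; omega)] at h1
      have h2 : Q1.val (qg j) < Q1.val ((qg j).1, (qg j).2 + 1) := by
        refine DDAux.val_lt Q1 (by rw [hsh1]; exact hwsh) (le_refl _) (Nat.le_succ _) ?_
        intro hcon
        have := congrArg Prod.snd hcon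
        change (qg j).2 = (qg j).2 + 1 at this
        omega
      have := (hqval j (by omega)).1
      omega
    · rcases Nat.eq_or_lt_of_le hbg with heq | hbg'
      · -- value = u+1 : the box is p₀, contradiction with hwnp
        refine hwnp ?_
        have h2 : ((qg j).1, (qg j).2 + 1) = pg 0 :=
          DDAux.val_inj Q hwsh (hpsh 0 hplen) (by rw [hphead', ← heq])
        rw [h2]; exact hpel 0 hplen
      · -- value in [u+2, k+2] : q should have preferred w over y
        have h1 := hoff1' _ hwsh hwnp
        rw [if_pos (by rw [Finset.mem_Icc]; omega)] at h1
        have hmin := hqmin j hj ((qg j).1, (qg j).2 + 1) (Or.inr rfl) hwsh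
          (by rw [Finset.mem_Icc, h1]; omega)
        omega
  -- ** Exchange lemma, case B: if q steps RIGHT onto p, then p continues RIGHT **
  have lemStar' : ∀ j t, j + 1 < q.length → t + 1 < p.length → qg (j+1) = pg t →
      qg (j+1) = ((qg j).1, (qg j).2 + 1) →
      pg (t+1) = ((pg t).1, (pg t).2 + 1) := by
    intro j t hj ht hqt hright
    rcases hpstep t ht with h | h
    swap
    · exact h
    exfalso
    have hzco : pg (t+1) = ((qg j).1 + 1, (qg j).2 + 1) := by
      rw [h, ← hqt, hright]
    have hzsh : pg (t+1) ∈ Q.shape := hpsh (t+1) ht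
    have hwsh : ((qg j).1 + 1, (qg j).2) ∈ Q.shape := by
      refine DDAux.mem_of_le hzsh ?_ ?_ <;> rw [hzco] <;> exact Nat.le_succ _
    have hwne : ((qg j).1 + 1, (qg j).2) ≠ pg (t+1) := by
      rw [hzco]
      intro hcon
      have := congrArg Prod.snd hcon
      change (qg j).2 = (qg j).2 + 1 at this
      omega
    have hwlt : Q.val ((qg j).1 + 1, (qg j).2) < Q.val (pg (t+1)) := by
      refine DDAux.val_lt Q hzsh ?_ ?_ hwne <;> rw [hzco] <;> exact Nat.le_succ _
    have hyco : pg t = ((qg j).1, (qg j).2 + 1) := by rw [← hqt, hright]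
    have hwnp : ((qg j).1 + 1, (qg j).2) ∉ p := by
      intro hc
      obtain ⟨t', ht', hteq⟩ := hpidx _ hc
      rcases Nat.lt_or_ge t' t with hlt | hge
      · have h2 := (hpm t' t (le_of_lt hlt) (by omega)).1
        rw [hteq, hyco] at h2
        change (qg j).1 + 1 ≤ (qg j).1 at h2
        omega
      · rcases Nat.eq_or_lt_of_le hge with heq | hlt
        · have h2 : ((qg j).1 + 1, (qg j).2) = ((qg j).1, (qg j).2 + 1) := by
            rw [← hteq, ← heq, hyco]
          have h3 := congrArg Prod.fst h2
          change (qg j).1 + 1 = (qg j).1 at h3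
          omega
        · have h2 := (hpm t t' (le_of_lt hlt) ht').2.1
          rw [hteq, hyco] at h2
          change (qg j).2 + 1 ≤ (qg j).2 at h2
          omega
    have hvz1 : Q.val (pg (t+1)) ≤ k + 2 := (hpval (t+1) ht).2
    have hvz2 : u + 2 ≤ Q.val (pg (t+1)) := by
      have h2 := hpvmono t (t+1) (by omega) ht
      have := (hpval t (by omega)).1
      omega
    have hyv : Q1.val (qg (j+1)) = Q.val (pg (t+1)) - 1 := by rw [hqt]; exact hv1' t ht
    rcases Nat.lt_or_ge (Q.val ((qg j).1 + 1, (qg j).2)) (u+1) with hsm | hbg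
    · have h1 := hoff1' _ hwsh hwnp
      rw [if_neg (by rw [Finset.mem_Icc]; omega)] at h1
      have h2 : Q1.val (qg j) < Q1.val ((qg j).1 + 1, (qg j).2) := by
        refine DDAux.val_lt Q1 (by rw [hsh1]; exact hwsh) (Nat.le_succ _) (le_refl _) ?_
        intro hcon
        have := congrArg Prod.fst hcon
        change (qg j).1 = (qg j).1 + 1 at this
        omega
      have := (hqval j (by omega)).1
      omega
    · rcases Nat.eq_or_lt_of_le hbg with heq | hbg'
      · refine hwnp ?_
        have h2 : ((qg j).1 + 1, (qg j).2) = pg 0 :=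
          DDAux.val_inj Q hwsh (hpsh 0 hplen) (by rw [hphead', ← heq])
        rw [h2]; exact hpel 0 hplen
      · have h1 := hoff1' _ hwsh hwnp
        rw [if_pos (by rw [Finset.mem_Icc]; omega)] at h1
        have hmin := hqmin j hj ((qg j).1 + 1, (qg j).2) (Or.inl rfl) hwsh
          (by rw [Finset.mem_Icc, h1]; omega)
        omega
  -- q boxes are never the last box of p, so any q-box on p has a successor on p
  have hqonp : ∀ j, j < q.length → ∀ t, t < p.length → qg j = pg t → t + 1 < p.length := by
    intro j hj t ht heq
    rcases Nat.lt_or_ge (t+1) p.length with h | h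
    · exact h
    have ht' : t = p.length - 1 := by omega
    exact absurd (by rw [heq, ht']) (hqnpm j hj)
  -- ** Invariant, case A **
  have invA : (qg 0).1 < (pg 0).1 → ∀ j, j < q.length →
      ((∃ i, i + 1 < p.length ∧ qg j = pg i ∧ pg (i+1) = ((pg i).1 + 1, (pg i).2)) ∨
       (qg j ∉ p ∧ ∀ i, i < p.length → (qg j).1 < (pg i).1 ∨ (pg i).2 < (qg j).2)) := by
    intro hA j
    induction j with
    | zero =>
      intro _
      right
      exact ⟨hq0np, fun i hi => Or.inl (lt_of_lt_of_le hA ((hpm 0 i (by omega) hi).1))⟩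
    | succ j ih =>
      intro hj
      have hjq : j < q.length := by omega
      have IH := ih hjq
      rcases hqstep j hj with hdown | hright
      · -- y = down x
        have hxrow : (qg (j+1)).1 = (qg j).1 + 1 := by rw [hdown]
        have hxcol : (qg (j+1)).2 = (qg j).2 := by rw [hdown]
        by_cases hyp : qg (j+1) ∈ p
        · obtain ⟨t, ht, hteq⟩ := hpidx _ hyp
          have ht1 : t + 1 < p.length := hqonp (j+1) hj t ht hteq.symm
          exact Or.inl ⟨t, ht1, hteq.symm, lemStar j t hj ht1 hteq.symm hdown⟩
        · right
          refine ⟨hyp, ?_⟩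
          obtain ⟨hxnp, hCR⟩ : qg j ∉ p ∧ (∀ i, i < p.length →
              (qg j).1 < (pg i).1 ∨ (pg i).2 < (qg j).2) := by
            rcases IH with ⟨i0, hi0, hxeq, hxdir⟩ | h'
            · exfalso
              refine hyp ?_
              have hyeq : qg (j+1) = pg (i0+1) := by rw [hdown, hxeq, hxdir]
              rw [hyeq]
              exact hpel (i0+1) hi0
            · exact h'
          intro i hi
          by_contra hcon
          push_neg at hcon
          obtain ⟨hc1, hc2⟩ := hcon
          have hrow : (pg i).1 = (qg (j+1)).1 := by
            rcases hCR i hi with h' | h' <;> omega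
          have hcol : (qg (j+1)).2 < (pg i).2 := by
            rcases Nat.lt_or_ge (qg (j+1)).2 (pg i).2 with h' | h'
            · exact h'
            · exfalso
              refine hyp ?_
              have hyeq : qg (j+1) = pg i := Prod.ext (by omega) (by omega)
              rw [hyeq]; exact hpel i hi
          have hexi : ∃ t, t < p.length ∧ (pg t).1 = (qg (j+1)).1 := ⟨i, hi, hrow⟩
          obtain ⟨s, ⟨hs1, hs2⟩, hsmin⟩ : ∃ s, (s < p.length ∧ (pg s).1 = (qg (j+1)).1) ∧
              ∀ t', t' < s → ¬(t' < p.length ∧ (pg t').1 = (qg (j+1)).1) :=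
            ⟨Nat.find hexi, Nat.find_spec hexi, fun t' ht' => Nat.find_min hexi ht'⟩
          have hsle : s ≤ i := by
            rcases Nat.lt_or_ge i s with h' | h'
            · exact absurd ⟨hi, hrow⟩ (hsmin i h')
            · omega
          have hscol : (qg (j+1)).2 < (pg s).2 := by
            rcases Nat.lt_or_ge (qg (j+1)).2 (pg s).2 with h' | h'
            · exact h'
            · exfalso
              have hsum := (hpm s i hsle hi).2.2
              set t := s + ((qg (j+1)).2 - (pg s).2) with htdef
              have hti : t ≤ i := by omega
              have htrow : (pg t).1 = (qg (j+1)).1 := by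
                have l1 := (hpm s t (by omega) (by omega)).1
                have l2 := (hpm t i hti hi).1
                omega
              have htsum := (hpm s t (by omega) (by omega)).2.2
              have htcol : (pg t).2 = (qg (j+1)).2 := by omega
              refine hyp ?_
              have hyeq : qg (j+1) = pg t := Prod.ext (by omega) (by omega)
              rw [hyeq]; exact hpel t (by omega)
          rcases Nat.eq_zero_or_pos s with hs0 | hspos
          · -- s = 0 : y would be strictly left of p₀ in the same row
            rw [hs0] at hs2 hscol
            have hylt : Q.val (qg (j+1)) < Q.val (pg 0) := by
              refine DDAux.val_lt Q (hpsh 0 hplen) (by omega) (by omega) ?_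
              intro hcon
              rw [hcon] at hyp
              exact hyp (hpel 0 hplen)
            rw [hphead'] at hylt
            have hoffy := hoff1' (qg (j+1)) (hqsh (j+1) hj) hyp
            rw [if_neg (by rw [Finset.mem_Icc]; omega)] at hoffy
            have := hqvmono j hj
            have := (hqval j hjq).1
            have := (hqval (j+1) hj).1
            omega
          · -- s ≥ 1 : p entered this row from above, contradicting CR x
            have hsm1 : s - 1 + 1 = s := by omega
            have hlt1 : (pg (s-1)).1 < (pg s).1 := by
              have hmono := (hpm (s-1) s (by omega) hs1).1
              rcases Nat.lt_or_ge (pg (s-1)).1 (pg s).1 with h' | h'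
              · exact h'
              · exact absurd ⟨by omega, by omega⟩ (hsmin (s-1) (by omega))
            have hstep1 := hpstep (s-1) (by rw [hsm1]; exact hs1)
            rw [hsm1] at hstep1
            rcases hstep1 with h' | h'
            · have hco1 : (pg s).1 = (pg (s-1)).1 + 1 := by
                have := congrArg Prod.fst h'
                change (pg s).1 = (pg (s-1)).1 + 1 at this
                exact this
              have hco2 : (pg s).2 = (pg (s-1)).2 := by
                have := congrArg Prod.snd h'
                change (pg s).2 = (pg (s-1)).2 at this
                exact this
              rcases hCR (s-1) (by omega) with h'' | h'' <;> omega
            · have := congrArg Prod.fst h'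
              change (pg s).1 = (pg (s-1)).1 at this
              omega
      · -- y = right x
        have hxrow : (qg (j+1)).1 = (qg j).1 := by rw [hright]
        have hxcol : (qg (j+1)).2 = (qg j).2 + 1 := by rw [hright]
        have key : ∀ t, t < p.length → ¬ ((pg t).1 ≤ (qg (j+1)).1 ∧ (qg (j+1)).2 ≤ (pg t).2) := by
          rintro t ht ⟨hc1, hc2⟩
          rcases IH with ⟨i0, hi0, hxeq, hxdir⟩ | ⟨hxnp, hCR⟩
          · have e1 := congrArg Prod.fst hxeq
            have e2 := congrArg Prod.snd hxeq
            have d1 : (pg (i0+1)).1 = (pg i0).1 + 1 := by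
              have := congrArg Prod.fst hxdir
              change (pg (i0+1)).1 = (pg i0).1 + 1 at this
              exact this
            rcases Nat.lt_or_ge i0 t with hlt | hge
            · have := (hpm (i0+1) t hlt ht).1
              omega
            · have := (hpm t i0 hge (by omega)).2.1
              omega
          · rcases hCR t ht with h' | h' <;> omega
        have hynp : qg (j+1) ∉ p := by
          intro hc
          obtain ⟨t, ht, hteq⟩ := hpidx _ hc
          exact key t ht ⟨by rw [hteq], by rw [hteq]⟩
        refine Or.inr ⟨hynp, fun i hi => ?_⟩
        rcases Nat.lt_or_ge (qg (j+1)).1 (pg i).1 with h' | h'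
        · exact Or.inl h'
        · rcases Nat.lt_or_ge (pg i).2 (qg (j+1)).2 with h'' | h''
          · exact Or.inr h''
          · exact absurd ⟨h', h''⟩ (key i hi)
  -- ** Invariant, case B **
  have invB : (pg 0).1 ≤ (qg 0).1 → ∀ j, j < q.length →
      ((∃ i, i + 1 < p.length ∧ qg j = pg i ∧ pg (i+1) = ((pg i).1, (pg i).2 + 1)) ∨
       (qg j ∉ p ∧ ∀ i, i < p.length → (pg i).1 < (qg j).1 ∨ (qg j).2 < (pg i).2)) := by
    intro hB j
    have hq0col : (qg 0).2 < (pg 0).2 := by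
      rcases Nat.lt_or_ge (qg 0).2 (pg 0).2 with h' | h'
      · exact h'
      · exfalso
        have hne : pg 0 ≠ qg 0 := by
          intro hcon; rw [← hcon] at hq0np; exact hq0np (hpel 0 hplen)
        have := DDAux.val_lt Q (hqsh 0 hqlen) hB h' hne
        rw [hphead', hq0Q] at this
        omega
    induction j with
    | zero =>
      intro _
      right
      exact ⟨hq0np, fun i hi => Or.inr (lt_of_lt_of_le hq0col ((hpm 0 i (by omega) hi).2.1))⟩
    | succ j ih =>
      intro hj
      have hjq : j < q.length := by omega
      have IH := ih hjq
      rcases hqstep j hj with hdown | hright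
      · -- y = down x
        have hxrow : (qg (j+1)).1 = (qg j).1 + 1 := by rw [hdown]
        have hxcol : (qg (j+1)).2 = (qg j).2 := by rw [hdown]
        have key : ∀ t, t < p.length → ¬ ((qg (j+1)).1 ≤ (pg t).1 ∧ (pg t).2 ≤ (qg (j+1)).2) := by
          rintro t ht ⟨hc1, hc2⟩
          rcases IH with ⟨i0, hi0, hxeq, hxdir⟩ | ⟨hxnp, hCL⟩
          · have e1 := congrArg Prod.fst hxeq
            have e2 := congrArg Prod.snd hxeq
            have d2 : (pg (i0+1)).2 = (pg i0).2 + 1 := by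
              have := congrArg Prod.snd hxdir
              change (pg (i0+1)).2 = (pg i0).2 + 1 at this
              exact this
            rcases Nat.lt_or_ge i0 t with hlt | hge
            · have := (hpm (i0+1) t hlt ht).2.1
              omega
            · have := (hpm t i0 hge (by omega)).1
              omega
          · rcases hCL t ht with h' | h' <;> omega
        have hynp : qg (j+1) ∉ p := by
          intro hc
          obtain ⟨t, ht, hteq⟩ := hpidx _ hc
          exact key t ht ⟨by rw [hteq], by rw [hteq]⟩
        refine Or.inr ⟨hynp, fun i hi => ?_⟩
        rcases Nat.lt_or_ge (pg i).1 (qg (j+1)).1 with h' | h'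
        · exact Or.inl h'
        · rcases Nat.lt_or_ge (qg (j+1)).2 (pg i).2 with h'' | h''
          · exact Or.inr h''
          · exact absurd ⟨h', h''⟩ (key i hi)
      · -- y = right x
        have hxrow : (qg (j+1)).1 = (qg j).1 := by rw [hright]
        have hxcol : (qg (j+1)).2 = (qg j).2 + 1 := by rw [hright]
        by_cases hyp : qg (j+1) ∈ p
        · obtain ⟨t, ht, hteq⟩ := hpidx _ hyp
          have ht1 : t + 1 < p.length := hqonp (j+1) hj t ht hteq.symm
          exact Or.inl ⟨t, ht1, hteq.symm, lemStar' j t hj ht1 hteq.symm hright⟩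
        · right
          refine ⟨hyp, ?_⟩
          obtain ⟨hxnp, hCL⟩ : qg j ∉ p ∧ (∀ i, i < p.length →
              (pg i).1 < (qg j).1 ∨ (qg j).2 < (pg i).2) := by
            rcases IH with ⟨i0, hi0, hxeq, hxdir⟩ | h'
            · exfalso
              refine hyp ?_
              have hyeq : qg (j+1) = pg (i0+1) := by rw [hright, hxeq, hxdir]
              rw [hyeq]
              exact hpel (i0+1) hi0
            · exact h'
          intro i hi
          by_contra hcon
          push_neg at hcon
          obtain ⟨hc1, hc2⟩ := hcon
          have hcoleq : (pg i).2 = (qg (j+1)).2 := by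
            rcases hCL i hi with h' | h' <;> omega
          have hrowlt : (qg (j+1)).1 < (pg i).1 := by
            rcases Nat.lt_or_ge (qg (j+1)).1 (pg i).1 with h' | h'
            · exact h'
            · exfalso
              refine hyp ?_
              have hyeq : qg (j+1) = pg i := Prod.ext (by omega) (by omega)
              rw [hyeq]; exact hpel i hi
          have hexi : ∃ t, t < p.length ∧ (pg t).2 = (qg (j+1)).2 := ⟨i, hi, hcoleq⟩
          obtain ⟨s, ⟨hs1, hs2⟩, hsmin⟩ : ∃ s, (s < p.length ∧ (pg s).2 = (qg (j+1)).2) ∧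
              ∀ t', t' < s → ¬(t' < p.length ∧ (pg t').2 = (qg (j+1)).2) :=
            ⟨Nat.find hexi, Nat.find_spec hexi, fun t' ht' => Nat.find_min hexi ht'⟩
          have hsle : s ≤ i := by
            rcases Nat.lt_or_ge i s with h' | h'
            · exact absurd ⟨hi, hcoleq⟩ (hsmin i h')
            · omega
          have hsrow : (qg (j+1)).1 < (pg s).1 := by
            rcases Nat.lt_or_ge (qg (j+1)).1 (pg s).1 with h' | h'
            · exact h'
            · exfalso
              have hsum := (hpm s i hsle hi).2.2
              set t := s + ((qg (j+1)).1 - (pg s).1) with htdef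
              have hti : t ≤ i := by omega
              have htcol : (pg t).2 = (qg (j+1)).2 := by
                have l1 := (hpm s t (by omega) (by omega)).2.1
                have l2 := (hpm t i hti hi).2.1
                omega
              have htsum := (hpm s t (by omega) (by omega)).2.2
              have htrow : (pg t).1 = (qg (j+1)).1 := by omega
              refine hyp ?_
              have hyeq : qg (j+1) = pg t := Prod.ext (by omega) (by omega)
              rw [hyeq]; exact hpel t (by omega)
          rcases Nat.eq_zero_or_pos s with hs0 | hspos
          · -- s = 0 : y would be strictly above p₀ in the same column
            rw [hs0] at hs2 hsrow
            have hylt : Q.val (qg (j+1)) < Q.val (pg 0) := by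
              refine DDAux.val_lt Q (hpsh 0 hplen) (by omega) (by omega) ?_
              intro hcon
              rw [hcon] at hyp
              exact hyp (hpel 0 hplen)
            rw [hphead'] at hylt
            have hoffy := hoff1' (qg (j+1)) (hqsh (j+1) hj) hyp
            rw [if_neg (by rw [Finset.mem_Icc]; omega)] at hoffy
            have := hqvmono j hj
            have := (hqval j hjq).1
            have := (hqval (j+1) hj).1
            omega
          · -- s ≥ 1 : p entered this column from the left, contradicting CL x
            have hsm1 : s - 1 + 1 = s := by omega
            have hlt1 : (pg (s-1)).2 < (pg s).2 := by
              have hmono := (hpm (s-1) s (by omega) hs1).2.1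
              rcases Nat.lt_or_ge (pg (s-1)).2 (pg s).2 with h' | h'
              · exact h'
              · exact absurd ⟨by omega, by omega⟩ (hsmin (s-1) (by omega))
            have hstep1 := hpstep (s-1) (by rw [hsm1]; exact hs1)
            rw [hsm1] at hstep1
            rcases hstep1 with h' | h'
            · have := congrArg Prod.snd h'
              change (pg s).2 = (pg (s-1)).2 at this
              omega
            · have hco1 : (pg s).2 = (pg (s-1)).2 + 1 := by
                have := congrArg Prod.snd h'
                change (pg s).2 = (pg (s-1)).2 + 1 at this
                exact this
              have hco2 : (pg s).1 = (pg (s-1)).1 := by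
                have := congrArg Prod.fst h'
                change (pg s).1 = (pg (s-1)).1 at this
                exact this
              rcases hCL (s-1) (by omega) with h'' | h'' <;> omega
  -- ** endgame **
  have hql1 : q.length - 1 < q.length := by omega
  have hpl1 : p.length - 1 < p.length := by omega
  have hdesQ : u ∈ Q.des ↔ (qg 0).1 < (pg 0).1 := by
    simp only [SYT.des, Finset.mem_filter, Finset.mem_Icc]
    constructor
    · rintro ⟨-, c, hc, d, hd', hcv, hdv, hlt⟩
      have hc' : c = qg 0 := DDAux.val_inj Q hc (hqsh 0 hqlen) (by rw [hcv, hq0Q])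
      have hd'' : d = pg 0 := DDAux.val_inj Q hd' (hpsh 0 hplen) (by rw [hdv, hphead'])
      rw [hc', hd''] at hlt
      exact hlt
    · intro hlt
      exact ⟨by omega, qg 0, hqsh 0 hqlen, pg 0, hpsh 0 hplen, hq0Q, hphead', hlt⟩
  have hpmnq : pg (p.length - 1) ∉ q := by
    intro hc
    obtain ⟨j, hjl, hjeq⟩ := hqidx _ hc
    exact hqnpm j hjl hjeq
  have hQ2pm : Q2.val (pg (p.length - 1)) = k + 2 := by
    have h0 := hoff2' _ (hpsh _ hpl1) hpmnq
    rw [hvl1'] at h0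
    rw [if_neg (by rw [Finset.mem_Icc]; omega)] at h0
    exact h0
  have hsh2' : Q2.shape = Q.shape := by rw [hsh2, hsh1]
  have hdesQ2 : (k+1) ∈ Q2.des ↔ (qg (q.length - 1)).1 < (pg (p.length - 1)).1 := by
    simp only [SYT.des, Finset.mem_filter, Finset.mem_Icc]
    constructor
    · rintro ⟨-, c, hc, d, hd', hcv, hdv, hlt⟩
      have hc' : c = qg (q.length - 1) :=
        DDAux.val_inj Q2 hc (by rw [hsh2']; exact hqsh _ hql1) (by rw [hcv, hvl2'])
      have hd'' : d = pg (p.length - 1) :=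
        DDAux.val_inj Q2 hd' (by rw [hsh2']; exact hpsh _ hpl1) (by rw [hdv, hQ2pm])
      rw [hc', hd''] at hlt
      exact hlt
    · intro hlt
      exact ⟨by omega, qg (q.length - 1), by rw [hsh2']; exact hqsh _ hql1,
        pg (p.length - 1), by rw [hsh2']; exact hpsh _ hpl1, hvl2', hQ2pm, hlt⟩
  rw [hdesQ, hdesQ2]
  constructor
  · -- forward: u ∈ Des(Q) ⇒ k+1 ∈ Des(Q2)
    intro hA
    rcases invA hA (q.length - 1) hql1 with ⟨i, hi1, hieq, hidir⟩ | ⟨hynp, hCR⟩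
    · have hstopped := hqstop' (pg (i+1)) (Or.inl (by rw [hieq]; exact hidir)) (hpsh (i+1) hi1)
      have hi2 : i + 1 = p.length - 1 := by
        rcases Nat.lt_or_ge (i+2) p.length with h | h
        · exfalso
          have hv := hv1' (i+1) h
          have h1 := (hpval (i+1+1) h).2
          have h2 := hpvmono (i+1) (i+1+1) (by omega) h
          have h3 := (hpval (i+1) (by omega)).1
          refine hstopped ?_
          rw [Finset.mem_Icc, hv]
          omega
        · omega
      have d1 : (pg (i+1)).1 = (pg i).1 + 1 := by
        have := congrArg Prod.fst hidir
        change (pg (i+1)).1 = (pg i).1 + 1 at this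
        exact this
      have e1 := congrArg Prod.fst hieq
      rw [← hi2]
      omega
    · by_contra hno
      push_neg at hno
      have h' : (pg (p.length - 1)).2 < (qg (q.length - 1)).2 := by
        rcases hCR (p.length - 1) hpl1 with h' | h'
        · omega
        · exact h'
      have hne : pg (p.length - 1) ≠ qg (q.length - 1) := by
        intro hcon
        rw [← hcon] at hynp
        exact hynp (hpel _ hpl1)
      have := DDAux.val_lt Q1 (hqsh1 _ hql1) hno (le_of_lt h') hne
      rw [hvl1'] at this
      have := (hqval _ hql1).2
      omega
  · -- backward: k+1 ∈ Des(Q2) ⇒ u ∈ Des(Q)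
    intro hA2
    by_contra hB
    push_neg at hB
    rcases invB hB (q.length - 1) hql1 with ⟨i, hi1, hieq, hidir⟩ | ⟨hynp, hCL⟩
    · have hstopped := hqstop' (pg (i+1)) (Or.inr (by rw [hieq]; exact hidir)) (hpsh (i+1) hi1)
      have hi2 : i + 1 = p.length - 1 := by
        rcases Nat.lt_or_ge (i+2) p.length with h | h
        · exfalso
          have hv := hv1' (i+1) h
          have h1 := (hpval (i+1+1) h).2
          have h2 := hpvmono (i+1) (i+1+1) (by omega) h
          have h3 := (hpval (i+1) (by omega)).1
          refine hstopped ?_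
          rw [Finset.mem_Icc, hv]
          omega
        · omega
      have d1 : (pg (i+1)).1 = (pg i).1 := by
        have := congrArg Prod.fst hidir
        change (pg (i+1)).1 = (pg i).1 at this
        exact this
      have e1 := congrArg Prod.fst hieq
      rw [← hi2] at hA2
      omega
    · have hrow0 : (qg 0).1 ≤ (qg (q.length-1)).1 := (hqm 0 (q.length-1) (by omega) hql1).1
      obtain ⟨t, -, ht2, ht3⟩ := DDAux.path_cover_row hpstep 0 (p.length - 1)
        ((qg (q.length-1)).1 + 1) (by omega) hpl1 (by omega) (by omega)
      have htl : t < p.length := by omega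
      have htcol : (qg (q.length-1)).2 < (pg t).2 := by
        rcases hCL t htl with h' | h' <;> omega
      have hesh : ((qg (q.length-1)).1 + 1, (qg (q.length-1)).2) ∈ Q.shape := by
        refine DDAux.mem_of_le (hpsh t htl) ?_ ?_
        · change (qg (q.length-1)).1 + 1 ≤ (pg t).1
          omega
        · change (qg (q.length-1)).2 ≤ (pg t).2
          omega
      have hstopped := hqstop' _ (Or.inl rfl) hesh
      have hlow : Q1.val (qg (q.length-1)) <
          Q1.val ((qg (q.length-1)).1 + 1, (qg (q.length-1)).2) := by
        refine DDAux.val_lt Q1 (by rw [hsh1]; exact hesh) (Nat.le_succ _) (le_refl _) ?_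
        intro hcon
        have := congrArg Prod.fst hcon
        change (qg (q.length-1)).1 = (qg (q.length-1)).1 + 1 at this
        omega
      have hcolmono := (hpm t (p.length - 1) ht2 hpl1).2.1
      have hhigh : Q1.val ((qg (q.length-1)).1 + 1, (qg (q.length-1)).2) <
          Q1.val (pg (p.length - 1)) := by
        refine DDAux.val_lt Q1 (by rw [hsh1]; exact hpsh _ hpl1) ?_ ?_ ?_
        · change (qg (q.length-1)).1 + 1 ≤ (pg (p.length - 1)).1
          omega
        · change (qg (q.length-1)).2 ≤ (pg (p.length - 1)).2
          omega
        · intro hcon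
          have := congrArg Prod.snd hcon
          change (qg (q.length-1)).2 = (pg (p.length - 1)).2 at this
          omega
      rw [hvl1'] at hhigh
      have := (hqval (q.length-1) hql1).1
      refine hstopped ?_
      rw [Finset.mem_Icc]
      omega
end
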